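/- arXiv:1301.4871 — 4 statements merged into one kernel-verified Lean document; each statement's English description precedes it below -/
import Mathlib

section
/- For every integer r ≥ 1 there exists ε > 0 such that for all z ∈ ℂ with |z| < ε, writing x = z·exp(−z^r): (i) for every integer k with 1 ≤ k ≤ r−1, the series Σ_{m=0}^∞ ((rm+k)^{m−1}/m!)·x^{rm+k} converges absolutely and equals z^k/k; (ii) the series Σ_{m=1}^∞ ((rm)^{m−1}/m!)·x^{rm} converges absolutely and equals z^r. -/
open Finset

private lemma altsum_monomial : ∀ (N : ℕ) (j : ℕ), j < N →
    ∑ m ∈ Finset.range (N+1), (-1:ℂ)^m * (N.choose m) * (m:ℂ)^j = 0 := by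
  intro N
  induction N using Nat.strong_induction_on with
  | _ N ih =>
    intro j hj
    match j with
    | 0 =>
      have h := add_pow (-1 : ℂ) 1 N
      rw [neg_add_cancel, zero_pow (by omega)] at h
      simpa using h.symm
    | (j'+1) =>
      obtain ⟨M, rfl⟩ : ∃ M, N = M + 1 := ⟨N - 1, by omega⟩
      rw [Finset.sum_range_succ']
      simp only [Nat.cast_zero, zero_pow (Nat.succ_ne_zero j'), mul_zero, add_zero, Nat.cast_add,
        Nat.cast_one]
      have key : ∀ i, (-1:ℂ)^(i+1) * ((M+1).choose (i+1)) * ((i:ℂ)+1)^(j'+1)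
          = -((M:ℂ)+1) * ((-1:ℂ)^i * (M.choose i) * ((i:ℂ)+1)^(j')) := by
        intro i
        have hc : ((i:ℕ)+1) * ((M+1).choose (i+1)) = (M+1) * (M.choose i) := by
          rw [mul_comm, ← Nat.add_one_mul_choose_eq]
        have hc' : ((i:ℂ)+1) * (((M+1).choose (i+1) : ℕ) : ℂ) = ((M:ℂ)+1) * ((M.choose i : ℕ):ℂ) := by
          exact_mod_cast congrArg (Nat.cast (R := ℂ)) hc
        calc (-1:ℂ)^(i+1) * ((M+1).choose (i+1)) * ((i:ℂ)+1)^(j'+1)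
            = -((-1:ℂ)^i * (((i:ℂ)+1) * (((M+1).choose (i+1):ℕ):ℂ)) * ((i:ℂ)+1)^(j')) := by ring
          _ = -((M:ℂ)+1) * ((-1:ℂ)^i * (M.choose i) * ((i:ℂ)+1)^(j')) := by rw [hc']; ring
      rw [Finset.sum_congr rfl (fun i _ => key i), ← Finset.mul_sum]
      have expand : ∀ i : ℕ, ((i:ℂ)+1)^(j') = ∑ l ∈ range (j'+1), (i:ℂ)^l * (j'.choose l) := by
        intro i
        rw [add_pow]
        exact Finset.sum_congr rfl (fun l _ => by rw [one_pow, mul_one])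
      have step : ∀ i ∈ range (M+1), (-1:ℂ)^i * (M.choose i) * ((i:ℂ)+1)^(j')
          = ∑ l ∈ range (j'+1), ((j'.choose l:ℕ):ℂ) * ((-1:ℂ)^i * (M.choose i) * (i:ℂ)^l) := by
        intro i _
        rw [expand i, Finset.mul_sum]
        exact Finset.sum_congr rfl fun l _ => by ring
      rw [Finset.sum_congr rfl step, Finset.sum_comm]
      have inner : ∀ l ∈ range (j'+1),
          ∑ i ∈ range (M+1), ((j'.choose l:ℕ):ℂ) * ((-1:ℂ)^i * (M.choose i) * (i:ℂ)^l) = 0 := by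
        intro l hl
        rw [← Finset.mul_sum, ih M (by omega) l (by simp at hl ⊢; omega), mul_zero]
      rw [Finset.sum_eq_zero inner, mul_zero]

private lemma altsum_affine (N j : ℕ) (hj : j < N) (a b : ℂ) :
    ∑ m ∈ Finset.range (N+1), (-1:ℂ)^m * (N.choose m) * (a*m+b)^j = 0 := by
  have expand : ∀ m : ℕ, (a*(m:ℂ)+b)^j
      = ∑ l ∈ range (j+1), (a^l * b^(j-l) * (j.choose l)) * (m:ℂ)^l := by
    intro m
    rw [add_pow]
    exact Finset.sum_congr rfl fun l _ => by rw [mul_pow]; ring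
  have step : ∀ m ∈ range (N+1), (-1:ℂ)^m * (N.choose m) * (a*m+b)^j
      = ∑ l ∈ range (j+1), (a^l * b^(j-l) * (j.choose l)) * ((-1:ℂ)^m * (N.choose m) * (m:ℂ)^l) := by
    intro m _
    rw [expand m, Finset.mul_sum]
    exact Finset.sum_congr rfl fun l _ => by ring
  rw [Finset.sum_congr rfl step, Finset.sum_comm]
  apply Finset.sum_eq_zero
  intro l hl
  rw [← Finset.mul_sum, altsum_monomial N l (by simp at hl; omega), mul_zero]

private lemma pow_self_le' (M : ℕ) : (M:ℝ)^M ≤ (M.factorial : ℝ) * Real.exp M := by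
  have hs : Summable (fun n : ℕ => (M:ℝ)^n / n.factorial) := Real.summable_pow_div_factorial M
  have h1 : (M:ℝ)^M / M.factorial ≤ ∑' n : ℕ, (M:ℝ)^n / n.factorial := by
    apply Summable.le_tsum hs M
    intro n _
    positivity
  have h2 : ∑' n : ℕ, (M:ℝ)^n / n.factorial = Real.exp M := by
    rw [Real.exp_eq_exp_ℝ, NormedSpace.exp_eq_tsum_div]
  rw [h2] at h1
  have hM : (0:ℝ) < M.factorial := by exact_mod_cast M.factorial_pos
  calc (M:ℝ)^M = ((M:ℝ)^M / M.factorial) * M.factorial := by field_simp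
    _ ≤ Real.exp M * M.factorial := mul_le_mul_of_nonneg_right h1 hM.le
    _ = M.factorial * Real.exp M := by ring

private lemma choose_le_two_pow' (N m : ℕ) (h : m ≤ N) : N.choose m ≤ 2^N := by
  calc N.choose m ≤ ∑ i ∈ range (N+1), N.choose i :=
        Finset.single_le_sum (fun i _ => Nat.zero_le _) (Finset.mem_range.2 (by omega))
    _ = 2^N := Nat.sum_range_choose N

private lemma fact_bound (m n : ℕ) :
    ((m+n+1).factorial : ℝ) ≤ ((m:ℝ)+1)*((n:ℝ)+1) * 2^(m+n) * (m.factorial * n.factorial) := by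
  have h1 : (m+n+1).factorial = (m+n+1) * (m+n).factorial := rfl
  have h2 : (m+n).factorial = (m+n).choose m * (m.factorial * n.factorial) := by
    have := Nat.choose_mul_factorial_mul_factorial (Nat.le_add_right m n)
    rw [Nat.add_sub_cancel_left] at this
    rw [← this]; ring
  have h3 : (m+n+1) * (m+n).factorial ≤ (m+1)*(n+1) * (2^(m+n) * (m.factorial * n.factorial)) := by
    apply Nat.mul_le_mul
    · nlinarith [Nat.zero_le (m*n)]
    · rw [h2]
      exact Nat.mul_le_mul_right _ (choose_le_two_pow' (m+n) m (Nat.le_add_right m n))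
  calc ((m+n+1).factorial : ℝ) = ((m+n+1) * (m+n).factorial : ℕ) := by rw [← h1]
    _ ≤ (((m+1)*(n+1) * (2^(m+n) * (m.factorial * n.factorial)) : ℕ) : ℝ) := by exact_mod_cast h3
    _ = ((m:ℝ)+1)*((n:ℝ)+1) * 2^(m+n) * (m.factorial * n.factorial) := by push_cast; ring

set_option maxHeartbeats 1000000 in
private lemma bound_summable (r : ℕ) (w : ℝ) (hw : 0 ≤ w)
    (hq : 2 * Real.exp 1 * r * w < 1) :
    Summable (fun p : ℕ × ℕ =>
      ((r:ℝ)*((p.1:ℝ)+(p.2:ℝ)+1))^(p.1+p.2) / (p.1.factorial * p.2.factorial) * w^(p.1+p.2)) := by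
  have hq0 : (0:ℝ) ≤ 2 * Real.exp 1 * r * w := by positivity
  have hgeo : Summable (fun n : ℕ => ((n:ℝ)+1) * (2 * Real.exp 1 * r * w)^n) := by
    have h1 : Summable (fun n : ℕ => (n:ℝ)^1 * (2 * Real.exp 1 * r * w)^n) :=
      summable_pow_mul_geometric_of_norm_lt_one 1 (by rwa [Real.norm_of_nonneg hq0])
    have h2 : Summable (fun n : ℕ => (2 * Real.exp 1 * r * w)^n) :=
      summable_geometric_of_lt_one hq0 hq
    simpa [pow_one, add_mul, one_mul] using h1.add h2
  have hmaj : Summable (fun p : ℕ × ℕ =>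
      (Real.exp 1 * (((p.1:ℝ)+1) * (2 * Real.exp 1 * r * w)^p.1)) *
        (((p.2:ℝ)+1) * (2 * Real.exp 1 * r * w)^p.2)) :=
    Summable.mul_of_nonneg (hgeo.mul_left (Real.exp 1)) hgeo
      (fun n => by positivity) (fun n => by positivity)
  apply Summable.of_nonneg_of_le (fun p => by positivity) _ hmaj
  rintro ⟨m, n⟩
  simp only
  rw [div_mul_eq_mul_div, div_le_iff₀ (by positivity)]
  have claim1 : ((r:ℝ)*((m:ℝ)+(n:ℝ)+1))^(m+n)
      ≤ (r:ℝ)^(m+n) * (((m+n+1).factorial : ℝ) * (Real.exp 1)^(m+n+1)) := by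
    rw [mul_pow]
    apply mul_le_mul_of_nonneg_left _ (by positivity)
    calc ((m:ℝ)+(n:ℝ)+1)^(m+n) ≤ ((m:ℝ)+(n:ℝ)+1)^(m+n+1) := by
          apply pow_le_pow_right₀ (by push_cast; linarith [Nat.cast_nonneg (α := ℝ) m, Nat.cast_nonneg (α := ℝ) n]) (by omega)
      _ = (((m+n+1 : ℕ)):ℝ)^(m+n+1) := by push_cast; ring_nf
      _ ≤ ((m+n+1).factorial : ℝ) * Real.exp ((m+n+1:ℕ):ℝ) := pow_self_le' (m+n+1)
      _ = ((m+n+1).factorial : ℝ) * (Real.exp 1)^(m+n+1) := by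
          rw [← Real.exp_nat_mul, mul_one]
  calc ((r:ℝ)*((m:ℝ)+(n:ℝ)+1))^(m+n) * w^(m+n)
      ≤ ((r:ℝ)^(m+n) * (((m+n+1).factorial : ℝ) * (Real.exp 1)^(m+n+1))) * w^(m+n) :=
        mul_le_mul_of_nonneg_right claim1 (by positivity)
    _ ≤ ((r:ℝ)^(m+n) * ((((m:ℝ)+1)*((n:ℝ)+1) * 2^(m+n) * (m.factorial * n.factorial)) * (Real.exp 1)^(m+n+1))) * w^(m+n) := by
        have := fact_bound m n
        gcongr
    _ = (Real.exp 1 * (((m:ℝ)+1) * (2 * Real.exp 1 * r * w)^m)) *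
        (((n:ℝ)+1) * (2 * Real.exp 1 * r * w)^n) * (m.factorial * n.factorial) := by
        rw [mul_pow, mul_pow, mul_pow, mul_pow, mul_pow, mul_pow, pow_add, pow_add, pow_add, pow_succ]
        ring

private lemma engine {F : ℕ × ℕ → ℂ} {f d : ℕ → ℂ} {S : ℂ}
    (hnorm : Summable fun p => ‖F p‖)
    (hrow : ∀ m, HasSum (fun n => F (m, n)) (f m))
    (hdiag : ∀ N, ∑ p ∈ Finset.HasAntidiagonal.antidiagonal N, F p = d N)
    (hd : HasSum d S) :
    (Summable fun m => ‖f m‖) ∧ HasSum f S := by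
  have hF : Summable F := hnorm.of_norm
  have h2 : HasSum (fun x : (Σ n : ℕ, Finset.HasAntidiagonal.antidiagonal n) =>
      F (Finset.HasAntidiagonal.sigmaAntidiagonalEquivProd x)) (∑' p, F p) :=
    (Equiv.hasSum_iff _).2 hF.hasSum
  have h3 : HasSum d (∑' p, F p) := by
    apply HasSum.sigma h2
    intro N
    rw [← hdiag N]
    exact (Finset.HasAntidiagonal.antidiagonal N).hasSum F
  have hSval : S = ∑' p, F p := hd.unique h3
  constructor
  · have hg : Summable (fun m => ∑' n, ‖F (m, n)‖) :=
      ⟨∑' p, ‖F p‖, hnorm.hasSum.prod_fiberwise (fun m => (hnorm.prod_factor m).hasSum)⟩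
    apply Summable.of_nonneg_of_le (fun m => norm_nonneg _) _ hg
    intro m
    rw [← (hrow m).tsum_eq]
    exact norm_tsum_le_tsum_norm (hnorm.prod_factor m)
  · rw [hSval]
    exact hF.hasSum.prod_fiberwise hrow

private lemma neg_one_pow_sub (N m : ℕ) (h : m ≤ N) : (-1:ℂ)^(N-m) = (-1)^N * (-1)^m := by
  have h2 : (-1:ℂ)^m * (-1)^m = 1 := by rw [← mul_pow]; norm_num
  calc (-1:ℂ)^(N-m) = (-1)^(N-m) * ((-1)^m * (-1)^m) := by rw [h2, mul_one]
    _ = ((-1:ℂ)^(N-m) * (-1)^m) * (-1)^m := by ring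
    _ = (-1:ℂ)^N * (-1)^m := by rw [← pow_add, Nat.sub_add_cancel h]

private lemma row (c z y : ℂ) (E : ℕ) :
    HasSum (fun n : ℕ => (c * z^E) * (((E:ℂ) * -y)^n / n.factorial))
      (c * (z * Complex.exp (-y))^E) := by
  have h : HasSum (fun n : ℕ => ((E:ℂ) * -y)^n / n.factorial) (Complex.exp ((E:ℂ) * -y)) := by
    rw [Complex.exp_eq_exp_ℂ]
    exact NormedSpace.expSeries_div_hasSum_exp _
  have h2 := h.mul_left (c * z^E)
  have e : c * (z * Complex.exp (-y))^E = c * z^E * Complex.exp ((E:ℂ) * -y) := by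
    rw [mul_pow, ← Complex.exp_nat_mul, mul_assoc]
  rw [e]
  exact h2

private lemma diag1 (r k N : ℕ) (hk : 1 ≤ k) (hN : 1 ≤ N) (z : ℂ) :
    ∑ p ∈ Finset.HasAntidiagonal.antidiagonal N,
      ((((r*p.1+k:ℕ):ℂ)^((p.1:ℤ)-1) / (p.1.factorial:ℂ) * z^(r*p.1+k)) *
        ((((r*p.1+k:ℕ):ℂ) * -(z^r))^p.2 / (p.2.factorial:ℂ))) = 0 := by
  rw [Finset.Nat.sum_antidiagonal_eq_sum_range_succ_mk]
  have key : ∀ m ∈ range (N+1),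
      ((((r*m+k:ℕ):ℂ)^((m:ℤ)-1) / (m.factorial:ℂ) * z^(r*m+k)) *
        ((((r*m+k:ℕ):ℂ) * -(z^r))^(N-m) / (((N-m).factorial:ℕ):ℂ)))
      = (z^(r*N+k) * (-1:ℂ)^N / (N.factorial:ℂ)) *
          ((-1:ℂ)^m * (N.choose m) * ((r:ℂ)*m+(k:ℂ))^(N-1)) := by
    intro m hm
    have hm' : m ≤ N := by simp at hm; omega
    set x : ℂ := ((r*m+k:ℕ):ℂ) with hx
    have hx0 : x ≠ 0 := by
      simp only [hx, Ne, Nat.cast_eq_zero]; omega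
    have hxcast : x = (r:ℂ)*m+(k:ℂ) := by rw [hx]; push_cast; ring
    have hxp : x^((m:ℤ)-1) * x^(N-m) = x^(N-1) := by
      rw [← zpow_natCast x (N-m), ← zpow_add₀ hx0]
      have he : (m:ℤ)-1 + ((N-m:ℕ):ℤ) = ((N-1:ℕ):ℤ) := by
        push_cast [Nat.cast_sub hm', Nat.cast_sub hN]; ring
      rw [he, zpow_natCast]
    have hzp : z^(r*m+k) * z^(r*(N-m)) = z^(r*N+k) := by
      rw [← pow_add]
      congr 1
      have hmn : m + (N - m) = N := by omega
      calc r*m+k+r*(N-m) = r*(m+(N-m))+k := by ring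
        _ = r*N+k := by rw [hmn]
    have hfac : ((N.choose m : ℕ):ℂ) * (m.factorial:ℂ) * ((N-m).factorial:ℂ) = (N.factorial:ℂ) := by
      exact_mod_cast congrArg (Nat.cast (R := ℂ)) (Nat.choose_mul_factorial_mul_factorial hm')
    have hf1 : (m.factorial:ℂ) ≠ 0 := by exact_mod_cast m.factorial_ne_zero
    have hf2 : ((N-m).factorial:ℂ) ≠ 0 := by exact_mod_cast (N-m).factorial_ne_zero
    have hf3 : (N.factorial:ℂ) ≠ 0 := by exact_mod_cast N.factorial_ne_zero
    calc (x^((m:ℤ)-1) / (m.factorial:ℂ) * z^(r*m+k)) *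
          ((x * -(z^r))^(N-m) / ((N-m).factorial:ℂ))
        = (x^((m:ℤ)-1) * x^(N-m)) * (z^(r*m+k) * z^(r*(N-m))) * (-1:ℂ)^(N-m) /
            ((m.factorial:ℂ) * ((N-m).factorial:ℂ)) := by
          rw [show x * -(z^r) = (x * (-1)) * z^r by ring, mul_pow, mul_pow, ← pow_mul]
          ring
      _ = x^(N-1) * z^(r*N+k) * ((-1:ℂ)^N * (-1:ℂ)^m) /
            ((m.factorial:ℂ) * ((N-m).factorial:ℂ)) := by
          rw [hxp, hzp, neg_one_pow_sub N m hm']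
      _ = (z^(r*N+k) * (-1:ℂ)^N / (N.factorial:ℂ)) *
          ((-1:ℂ)^m * (N.choose m) * ((r:ℂ)*m+(k:ℂ))^(N-1)) := by
          rw [← hxcast]
          field_simp
          linear_combination (-(z^(r*N) * z^k)) * hfac
  refine Eq.trans (Finset.sum_congr rfl key) ?_
  rw [← Finset.mul_sum, altsum_affine N (N-1) (by omega), mul_zero]

private lemma diag2 (r N : ℕ) (hN : 1 ≤ N) (z : ℂ) :
    ∑ p ∈ Finset.HasAntidiagonal.antidiagonal N,
      ((((r*(p.1+1):ℕ):ℂ)^p.1 / ((p.1+1).factorial:ℂ) * z^(r*(p.1+1))) *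
        ((((r*(p.1+1):ℕ):ℂ) * -(z^r))^p.2 / (p.2.factorial:ℂ))) = 0 := by
  rw [Finset.Nat.sum_antidiagonal_eq_sum_range_succ_mk]
  have key : ∀ m ∈ range (N+1),
      ((((r*(m+1):ℕ):ℂ)^m / ((m+1).factorial:ℂ) * z^(r*(m+1))) *
        ((((r*(m+1):ℕ):ℂ) * -(z^r))^(N-m) / (((N-m).factorial:ℕ):ℂ)))
      = (z^(r*(N+1)) * (-1:ℂ)^N / ((N+1).factorial:ℂ)) *
          ((-1:ℂ)^m * ((N+1).choose (m+1)) * ((r:ℂ)*((m:ℂ)+1))^N) := by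
    intro m hm
    have hm' : m ≤ N := by simp at hm; omega
    set x : ℂ := ((r*(m+1):ℕ):ℂ) with hx
    have hxcast : x = (r:ℂ)*((m:ℂ)+1) := by rw [hx]; push_cast; ring
    have hxp : x^m * x^(N-m) = x^N := by
      rw [← pow_add]
      congr 1
      omega
    have hzp : z^(r*(m+1)) * z^(r*(N-m)) = z^(r*(N+1)) := by
      rw [← pow_add]
      congr 1
      have hmn : (m+1) + (N - m) = N+1 := by omega
      calc r*(m+1)+r*(N-m) = r*((m+1)+(N-m)) := by ring
        _ = r*(N+1) := by rw [hmn]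
    have hfac : (((N+1).choose (m+1) : ℕ):ℂ) * ((m+1).factorial:ℂ) * ((N-m).factorial:ℂ)
        = ((N+1).factorial:ℂ) := by
      have h := Nat.choose_mul_factorial_mul_factorial (show m+1 ≤ N+1 by omega)
      rw [Nat.succ_sub_succ] at h
      exact_mod_cast congrArg (Nat.cast (R := ℂ)) h
    have hf1 : ((m+1).factorial:ℂ) ≠ 0 := by exact_mod_cast (m+1).factorial_ne_zero
    have hf2 : ((N-m).factorial:ℂ) ≠ 0 := by exact_mod_cast (N-m).factorial_ne_zero
    have hf3 : ((N+1).factorial:ℂ) ≠ 0 := by exact_mod_cast (N+1).factorial_ne_zero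
    calc (x^m / ((m+1).factorial:ℂ) * z^(r*(m+1))) *
          ((x * -(z^r))^(N-m) / ((N-m).factorial:ℂ))
        = (x^m * x^(N-m)) * (z^(r*(m+1)) * z^(r*(N-m))) * (-1:ℂ)^(N-m) /
            (((m+1).factorial:ℂ) * ((N-m).factorial:ℂ)) := by
          rw [show x * -(z^r) = (x * (-1)) * z^r by ring, mul_pow, mul_pow, ← pow_mul]
          ring
      _ = x^N * z^(r*(N+1)) * ((-1:ℂ)^N * (-1:ℂ)^m) /
            (((m+1).factorial:ℂ) * ((N-m).factorial:ℂ)) := by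
          rw [hxp, hzp, neg_one_pow_sub N m hm']
      _ = (z^(r*(N+1)) * (-1:ℂ)^N / ((N+1).factorial:ℂ)) *
          ((-1:ℂ)^m * ((N+1).choose (m+1)) * ((r:ℂ)*((m:ℂ)+1))^N) := by
          rw [← hxcast]
          field_simp
          linear_combination (-(x^N * z^(r*(N+1)))) * hfac
  refine Eq.trans (Finset.sum_congr rfl key) ?_
  rw [← Finset.mul_sum]
  have h0 := altsum_affine (N+1) N (by omega) (r:ℂ) 0
  rw [Finset.sum_range_succ'] at h0
  simp only [Nat.cast_zero, mul_zero, add_zero, zero_pow (show N ≠ 0 by omega), mul_zero,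
    pow_zero, one_mul] at h0
  have step : ∀ i ∈ range (N+1),
      (-1:ℂ)^i * ((N+1).choose (i+1)) * ((r:ℂ)*((i:ℂ)+1))^N
      = -((-1:ℂ)^(i+1) * (((N+1).choose (i+1):ℕ):ℂ) * ((r:ℂ)*((i+1:ℕ):ℂ))^N) := by
    intro i _
    push_cast
    ring
  rw [Finset.sum_congr rfl step, Finset.sum_neg_distrib, h0, neg_zero, mul_zero]

private lemma normbound1 (r k : ℕ) (hk : 1 ≤ k) (hkr : k ≤ r) (z : ℂ) (hz1 : ‖z‖ ≤ 1) (m n : ℕ) :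
    ‖((((r*m+k:ℕ):ℂ)^((m:ℤ)-1) / (m.factorial:ℂ) * z^(r*m+k)) *
        ((((r*m+k:ℕ):ℂ) * -(z^r))^n / (n.factorial:ℂ)))‖
      ≤ ((r:ℝ)*((m:ℝ)+(n:ℝ)+1))^(m+n) / (m.factorial * n.factorial) * (‖z‖^r)^(m+n) := by
  have hX1 : (1:ℝ) ≤ ((r*m+k:ℕ):ℝ) := by exact_mod_cast (show 1 ≤ r*m+k by omega)
  have hX0 : ((r*m+k:ℕ):ℝ) ≠ 0 := by positivity
  have hXpos : (0:ℝ) < ((r*m+k:ℕ):ℝ) := lt_of_lt_of_le one_pos hX1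
  have hnorm_eq : ‖((((r*m+k:ℕ):ℂ)^((m:ℤ)-1) / (m.factorial:ℂ) * z^(r*m+k)) *
        ((((r*m+k:ℕ):ℂ) * -(z^r))^n / (n.factorial:ℂ)))‖
      = (((r*m+k:ℕ):ℝ)^((m:ℤ)-1) * ((r*m+k:ℕ):ℝ)^n) * (‖z‖^(r*m+k) * ‖z‖^(r*n)) /
          ((m.factorial:ℝ) * (n.factorial:ℝ)) := by
    simp only [norm_mul, norm_div, norm_zpow, norm_pow, norm_neg, Complex.norm_natCast]
    rw [mul_pow, ← pow_mul]
    ring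
  rw [hnorm_eq]
  have hA : ((r*m+k:ℕ):ℝ)^((m:ℤ)-1) * ((r*m+k:ℕ):ℝ)^n ≤ ((r:ℝ)*((m:ℝ)+(n:ℝ)+1))^(m+n) := by
    rw [← zpow_natCast ((r*m+k:ℕ):ℝ) n, ← zpow_add₀ hX0]
    calc ((r*m+k:ℕ):ℝ)^((m:ℤ)-1+n) ≤ ((r*m+k:ℕ):ℝ)^((m+n:ℕ):ℤ) :=
          zpow_le_zpow_right₀ hX1 (by push_cast; omega)
      _ = ((r*m+k:ℕ):ℝ)^(m+n) := zpow_natCast _ _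
      _ ≤ ((r:ℝ)*((m:ℝ)+(n:ℝ)+1))^(m+n) := by
          apply pow_le_pow_left₀ hXpos.le _ (m+n)
          have hkr' : (k:ℝ) ≤ (r:ℝ) := by exact_mod_cast hkr
          have hrn : (0:ℝ) ≤ (r:ℝ)*(n:ℝ) := by positivity
          push_cast
          nlinarith
  have hB : ‖z‖^(r*m+k) * ‖z‖^(r*n) ≤ (‖z‖^r)^(m+n) := by
    rw [← pow_add, ← pow_mul]
    apply pow_le_pow_of_le_one (norm_nonneg z) hz1
    have : r*(m+n) = r*m + r*n := by ring
    omega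
  have hfacpos : (0:ℝ) < (m.factorial:ℝ) * (n.factorial:ℝ) := by
    have := m.factorial_pos
    have := n.factorial_pos
    positivity
  rw [div_mul_eq_mul_div, div_le_div_iff_of_pos_right hfacpos]
  exact mul_le_mul hA hB (by positivity) (by positivity)

private lemma normbound2 (r : ℕ) (hr : 1 ≤ r) (z : ℂ) (hz1 : ‖z‖ ≤ 1) (m n : ℕ) :
    ‖((((r*(m+1):ℕ):ℂ)^m / ((m+1).factorial:ℂ) * z^(r*(m+1))) *
        ((((r*(m+1):ℕ):ℂ) * -(z^r))^n / (n.factorial:ℂ)))‖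
      ≤ ((r:ℝ)*((m:ℝ)+(n:ℝ)+1))^(m+n) / (m.factorial * n.factorial) * (‖z‖^r)^(m+n) := by
  have hnorm_eq : ‖((((r*(m+1):ℕ):ℂ)^m / ((m+1).factorial:ℂ) * z^(r*(m+1))) *
        ((((r*(m+1):ℕ):ℂ) * -(z^r))^n / (n.factorial:ℂ)))‖
      = (((r*(m+1):ℕ):ℝ)^m * ((r*(m+1):ℕ):ℝ)^n) * (‖z‖^(r*(m+1)) * ‖z‖^(r*n)) /
          (((m+1).factorial:ℝ) * (n.factorial:ℝ)) := by
    simp only [norm_mul, norm_div, norm_pow, norm_neg, Complex.norm_natCast]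
    rw [mul_pow, ← pow_mul]
    ring
  rw [hnorm_eq]
  have hA : ((r*(m+1):ℕ):ℝ)^m * ((r*(m+1):ℕ):ℝ)^n ≤ ((r:ℝ)*((m:ℝ)+(n:ℝ)+1))^(m+n) := by
    rw [← pow_add]
    apply pow_le_pow_left₀ (by positivity) _ (m+n)
    have hrn : (0:ℝ) ≤ (r:ℝ)*(n:ℝ) := by positivity
    push_cast
    nlinarith
  have hB : ‖z‖^(r*(m+1)) * ‖z‖^(r*n) ≤ (‖z‖^r)^(m+n) := by
    rw [← pow_add, ← pow_mul]
    apply pow_le_pow_of_le_one (norm_nonneg z) hz1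
    have h1 : r*(m+n) = r*m + r*n := by ring
    have h2 : r*(m+1) = r*m + r := by ring
    omega
  have hnum : (((r*(m+1):ℕ):ℝ)^m * ((r*(m+1):ℕ):ℝ)^n) * (‖z‖^(r*(m+1)) * ‖z‖^(r*n))
      ≤ ((r:ℝ)*((m:ℝ)+(n:ℝ)+1))^(m+n) * (‖z‖^r)^(m+n) :=
    mul_le_mul hA hB (by positivity) (by positivity)
  have hfacpos : (0:ℝ) < (m.factorial:ℝ) * (n.factorial:ℝ) := by
    have := m.factorial_pos
    have := n.factorial_pos
    positivity
  have hfacpos' : (0:ℝ) < ((m+1).factorial:ℝ) * (n.factorial:ℝ) := by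
    have := (m+1).factorial_pos
    have := n.factorial_pos
    positivity
  have hfacle : (m.factorial:ℝ) * (n.factorial:ℝ) ≤ ((m+1).factorial:ℝ) * (n.factorial:ℝ) := by
    have : m.factorial ≤ (m+1).factorial := Nat.factorial_le (by omega)
    have h2 : (m.factorial:ℝ) ≤ ((m+1).factorial:ℝ) := by exact_mod_cast this
    apply mul_le_mul_of_nonneg_right h2 (by positivity)
  rw [div_mul_eq_mul_div]
  exact div_le_div₀ (by positivity) hnum hfacpos hfacle

private lemma case1 (r k : ℕ) (hk : 1 ≤ k) (hkr : k ≤ r) (z : ℂ) (hz1 : ‖z‖ ≤ 1)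
    (hq : 2 * Real.exp 1 * r * ‖z‖^r < 1) :
    (Summable fun m : ℕ =>
      ‖((r*m+k:ℕ):ℂ)^((m:ℤ)-1) / (m.factorial:ℂ) * (z * Complex.exp (-z^r))^(r*m+k)‖) ∧
    HasSum (fun m : ℕ =>
      ((r*m+k:ℕ):ℂ)^((m:ℤ)-1) / (m.factorial:ℂ) * (z * Complex.exp (-z^r))^(r*m+k))
      (z^k / (k:ℂ)) := by
  apply engine (F := fun p : ℕ×ℕ =>
      ((((r*p.1+k:ℕ):ℂ)^((p.1:ℤ)-1) / (p.1.factorial:ℂ) * z^(r*p.1+k)) *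
        ((((r*p.1+k:ℕ):ℂ) * -(z^r))^p.2 / (p.2.factorial:ℂ))))
    (d := fun N => if N = 0 then z^k/(k:ℂ) else 0)
  · apply Summable.of_nonneg_of_le (fun p => norm_nonneg _) _
      (bound_summable r (‖z‖^r) (by positivity) hq)
    rintro ⟨m,n⟩
    exact normbound1 r k hk hkr z hz1 m n
  · intro m
    exact row (((r*m+k:ℕ):ℂ)^((m:ℤ)-1) / (m.factorial:ℂ)) z (z^r) (r*m+k)
  · intro N
    match N with
    | 0 =>
      rw [if_pos rfl]
      rw [show (Finset.HasAntidiagonal.antidiagonal 0 : Finset (ℕ×ℕ)) = {(0,0)} from rfl, Finset.sum_singleton]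
      have h1 : ((r*0+k:ℕ):ℂ) = (k:ℂ) := by norm_num
      have h2 : (0:ℤ)-1 = -1 := by norm_num
      simp only [h1, h2, Nat.factorial_zero, Nat.cast_one, div_one, pow_zero, zpow_neg_one]
      rw [Nat.mul_comm r 0]
      simp only [Nat.zero_mul, Nat.zero_add]
      field_simp
      rw [Nat.cast_zero, zero_sub, zpow_neg_one, div_eq_mul_inv, mul_comm]
    | (s+1) =>
      rw [if_neg (by omega)]
      exact diag1 r k (s+1) hk (by omega) z
  · exact hasSum_ite_eq 0 _

private lemma case2 (r : ℕ) (hr : 1 ≤ r) (z : ℂ) (hz1 : ‖z‖ ≤ 1)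
    (hq : 2 * Real.exp 1 * r * ‖z‖^r < 1) :
    (Summable fun m : ℕ =>
      ‖((r*(m+1):ℕ):ℂ)^m / ((m+1).factorial:ℂ) * (z * Complex.exp (-z^r))^(r*(m+1))‖) ∧
    HasSum (fun m : ℕ =>
      ((r*(m+1):ℕ):ℂ)^m / ((m+1).factorial:ℂ) * (z * Complex.exp (-z^r))^(r*(m+1))) (z^r) := by
  apply engine (F := fun p : ℕ×ℕ =>
      ((((r*(p.1+1):ℕ):ℂ)^p.1 / ((p.1+1).factorial:ℂ) * z^(r*(p.1+1))) *
        ((((r*(p.1+1):ℕ):ℂ) * -(z^r))^p.2 / (p.2.factorial:ℂ))))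
    (d := fun N => if N = 0 then z^r else 0)
  · apply Summable.of_nonneg_of_le (fun p => norm_nonneg _) _
      (bound_summable r (‖z‖^r) (by positivity) hq)
    rintro ⟨m,n⟩
    exact normbound2 r hr z hz1 m n
  · intro m
    have h := row (((r*(m+1):ℕ):ℂ)^m / ((m+1).factorial:ℂ)) z (z^r) (r*(m+1))
    exact h
  · intro N
    match N with
    | 0 =>
      rw [if_pos rfl]
      rw [show (Finset.HasAntidiagonal.antidiagonal 0 : Finset (ℕ×ℕ)) = {(0,0)} from rfl, Finset.sum_singleton]
      simp
    | (s+1) =>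
      rw [if_neg (by omega)]
      exact diag2 r (s+1) (by omega) z
  · exact hasSum_ite_eq 0 _



/-- for every r ≥ 1 there is ε > 0 such that for ‖z‖ < ε, with
x = z·exp(−z^r): (i) for 1 ≤ k ≤ r−1 the series Σ_{m≥0} ((rm+k)^{m−1}/m!)·x^{rm+k}
converges absolutely to z^k/k; (ii) Σ_{m≥1} ((rm)^{m−1}/m!)·x^{rm} converges absolutely
to z^r. -/
theorem stmt12 (r : ℕ) (hr : 1 ≤ r) :
    ∃ ε > (0 : ℝ), ∀ z : ℂ, ‖z‖ < ε →
      (∀ k : ℕ, 1 ≤ k → k ≤ r - 1 →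
        (Summable fun m : ℕ =>
          ‖((r * m + k : ℕ) : ℂ) ^ ((m : ℤ) - 1) / (Nat.factorial m : ℂ) *
            (z * Complex.exp (-z ^ r)) ^ (r * m + k)‖) ∧
        HasSum (fun m : ℕ =>
          ((r * m + k : ℕ) : ℂ) ^ ((m : ℤ) - 1) / (Nat.factorial m : ℂ) *
            (z * Complex.exp (-z ^ r)) ^ (r * m + k)) (z ^ k / (k : ℂ))) ∧
      (Summable fun m : ℕ =>
        ‖((r * (m + 1) : ℕ) : ℂ) ^ m / (Nat.factorial (m + 1) : ℂ) *
          (z * Complex.exp (-z ^ r)) ^ (r * (m + 1))‖) ∧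
      HasSum (fun m : ℕ =>
        ((r * (m + 1) : ℕ) : ℂ) ^ m / (Nat.factorial (m + 1) : ℂ) *
          (z * Complex.exp (-z ^ r)) ^ (r * (m + 1))) (z ^ r) := by
  have hrpos : (0:ℝ) < (r:ℝ) := by exact_mod_cast hr
  have hapos : (0:ℝ) < 2 * Real.exp 1 * (r:ℝ) := by positivity
  refine ⟨min 1 (2 * Real.exp 1 * (r:ℝ) + 1)⁻¹, lt_min one_pos (by positivity), ?_⟩
  intro z hz
  have hz1 : ‖z‖ ≤ 1 := le_of_lt (lt_of_lt_of_le hz (min_le_left _ _))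
  have hz2 : ‖z‖ < (2 * Real.exp 1 * (r:ℝ) + 1)⁻¹ := lt_of_lt_of_le hz (min_le_right _ _)
  have hq : 2 * Real.exp 1 * r * ‖z‖^r < 1 := by
    have hp : ‖z‖^r ≤ ‖z‖ := pow_le_of_le_one (norm_nonneg z) hz1 (by omega)
    calc 2 * Real.exp 1 * (r:ℝ) * ‖z‖^r ≤ 2 * Real.exp 1 * (r:ℝ) * ‖z‖ :=
          mul_le_mul_of_nonneg_left hp hapos.le
      _ < 2 * Real.exp 1 * (r:ℝ) * (2 * Real.exp 1 * (r:ℝ) + 1)⁻¹ :=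
          mul_lt_mul_of_pos_left hz2 hapos
      _ < 1 := by
          rw [← div_eq_mul_inv]
          exact (div_lt_one (by positivity)).mpr (by linarith)
  refine ⟨?_, ?_⟩
  · intro k hk1 hk2
    exact case1 r k hk1 (by omega) z hz1 hq
  · exact case2 r hr z hz1 hq
end

section
/- For every integer r ≥ 1 there exists ε > 0 such that for all z ∈ ℂ with |z| < ε and 1−rz^r ≠ 0, writing x = z·exp(−z^r): (i) for every integer k with 1 ≤ k ≤ r−1, the series Σ_{m=0}^∞ ((rm+k)^m/m!)·x^{rm+k} converges absolutely and equals z^k/(1−rz^r); (ii) the series Σ_{m=1}^∞ ((rm)^m/m!)·x^{rm} converges absolutely and equals r z^r/(1−rz^r). -/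
open Finset

lemma fd_low (a : ℂ) : ∀ n : ℕ, ∀ j < n, ∀ b : ℂ,
    (fwdDiff a)^[n] (fun y : ℂ => (y + b) ^ j) = 0 := by
  intro n
  induction n with
  | zero => omega
  | succ n IH =>
    intro j hj b
    rw [Function.iterate_succ_apply]
    have hΔ : fwdDiff a (fun y : ℂ => (y + b) ^ j)
        = ∑ i ∈ range j, fun y : ℂ => (j.choose i : ℂ) * a ^ (j - i) * (y + b) ^ i := by
      ext y
      simp only [fwdDiff, Finset.sum_apply]
      have h1 : y + a + b = (y + b) + a := by ring
      rw [h1, add_pow, Finset.sum_range_succ]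
      simp only [Nat.choose_self, Nat.cast_one, mul_one, Nat.sub_self, pow_zero]
      rw [add_sub_cancel_right]
      exact Finset.sum_congr rfl fun i hi => by ring
    rw [hΔ, fwdDiff_iter_finset_sum]
    apply Finset.sum_eq_zero
    intro i hi
    have h2 : (fun y : ℂ => (j.choose i : ℂ) * a ^ (j - i) * (y + b) ^ i)
        = ((j.choose i : ℂ) * a ^ (j - i)) • fun y : ℂ => (y + b) ^ i := by
      ext y; simp [smul_eq_mul, mul_assoc]
    rw [h2, fwdDiff_iter_const_smul, IH i (by simp at hi; omega) b]
    simp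

lemma fd_top (a : ℂ) : ∀ n : ℕ, ∀ b : ℂ,
    (fwdDiff a)^[n] (fun y : ℂ => (y + b) ^ n) = fun _ => (n.factorial : ℂ) * a ^ n := by
  intro n
  induction n with
  | zero => intro b; ext y; simp
  | succ n IH =>
    intro b
    rw [Function.iterate_succ_apply]
    have hΔ : fwdDiff a (fun y : ℂ => (y + b) ^ (n + 1))
        = (((n + 1 : ℕ) : ℂ) * a) • (fun y : ℂ => (y + b) ^ n)
          + ∑ i ∈ range n, ((((n+1).choose i : ℕ) : ℂ) * a ^ (n + 1 - i)) •
              fun y : ℂ => (y + b) ^ i := by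
      ext y
      simp only [fwdDiff, Finset.sum_apply, Pi.add_apply, Pi.smul_apply, smul_eq_mul]
      have h1 : y + a + b = (y + b) + a := by ring
      rw [h1, add_pow, Finset.sum_range_succ, Finset.sum_range_succ]
      simp only [Nat.choose_self, Nat.cast_one, mul_one, Nat.sub_self, pow_zero,
        Nat.choose_succ_self_right, Nat.add_sub_cancel_left, pow_one]
      have hs : ∑ x ∈ range n, (y+b)^x * a^(n+1-x) * (((n+1).choose x : ℕ) : ℂ)
          = ∑ x ∈ range n, (((n+1).choose x : ℕ) : ℂ) * a^(n+1-x) * (y+b)^x :=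
        Finset.sum_congr rfl fun i hi => by ring
      rw [hs]
      ring
    rw [hΔ, fwdDiff_iter_add, fwdDiff_iter_const_smul, IH, fwdDiff_iter_finset_sum]
    have hz : ∑ i ∈ range n, (fwdDiff a)^[n]
        (((((n+1).choose i : ℕ) : ℂ) * a ^ (n + 1 - i)) • fun y : ℂ => (y + b) ^ i) = 0 := by
      apply Finset.sum_eq_zero
      intro i hi
      rw [fwdDiff_iter_const_smul, fd_low a n i (by simp at hi; omega) b]
      simp
    rw [hz]
    ext y
    simp only [Pi.add_apply, Pi.smul_apply, Pi.zero_apply, smul_eq_mul, add_zero]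
    push_cast [Nat.factorial_succ]
    ring

-- key identity
lemma key_id (a b : ℂ) (n : ℕ) :
    ∑ m ∈ range (n + 1), ((-1 : ℂ) ^ (n - m) * (n.choose m : ℂ)) * (a * m + b) ^ n
      = (n.factorial : ℂ) * a ^ n := by
  have h := fwdDiff_iter_eq_sum_shift a (fun y : ℂ => (y + b) ^ n) n 0
  rw [fd_top a n b] at h
  simp only [zero_add, nsmul_eq_mul, zsmul_eq_mul] at h
  push_cast at h
  rw [h]
  exact Finset.sum_congr rfl fun i _ => by ring


lemma one_le_E : (1:ℝ) ≤ Real.exp 1 := by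
  have := Real.add_one_le_exp (1:ℝ); linarith

lemma pow_le_exp_mul_fact (n : ℕ) :
    ((n + 1 : ℕ) : ℝ) ^ n ≤ Real.exp 1 ^ (n + 1) * ((n+1).factorial : ℝ) := by
  have hfac : (0:ℝ) < ((n+1).factorial : ℝ) := by positivity
  have h1 : ((n+1:ℕ):ℝ) ^ (n+1) / ((n+1).factorial : ℝ) ≤ Real.exp ((n+1:ℕ):ℝ) := by
    calc ((n+1:ℕ):ℝ) ^ (n+1) / ((n+1).factorial : ℝ)
        ≤ ∑ i ∈ range (n+2), ((n+1:ℕ):ℝ) ^ i / (i.factorial : ℝ) := by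
          refine Finset.single_le_sum (f := fun i => ((n+1:ℕ):ℝ) ^ i / (i.factorial : ℝ))
            (fun i _ => by positivity) ?_
          simp [Finset.mem_range]
      _ ≤ Real.exp ((n+1:ℕ):ℝ) := Real.sum_le_exp_of_nonneg (by positivity) _
  have h2 : Real.exp ((n+1:ℕ):ℝ) = Real.exp 1 ^ (n+1) := by
    rw [← Real.exp_nat_mul]; norm_num
  have h3 : ((n+1:ℕ):ℝ) ^ n ≤ ((n+1:ℕ):ℝ) ^ (n+1) := by
    apply pow_le_pow_right₀ (by push_cast; linarith) (by omega)
  rw [div_le_iff₀ hfac] at h1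
  rw [h2] at h1
  linarith

-- the combinatorial/analytic bound: (r*m+k)^(m+j) ≤ 2E (4Ec)^(m+j) m! j!  with c = r+k
lemma big_bound (r k m j : ℕ) :
    ((r * m + k : ℕ) : ℝ) ^ (m + j) ≤
      2 * Real.exp 1 * (4 * Real.exp 1 * ((r:ℝ) + k)) ^ (m + j) *
        (m.factorial : ℝ) * (j.factorial : ℝ) := by
  set E := Real.exp 1 with hE
  have hE1 : (1:ℝ) ≤ E := one_le_E
  set c : ℝ := (r:ℝ) + k with hc
  have hc0 : (0:ℝ) ≤ c := by positivity
  have hN : ((r * m + k : ℕ) : ℝ) ≤ c * ((m + j + 1 : ℕ) : ℝ) := by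
    have h1 : (r * m + k : ℕ) ≤ (r + k) * (m + j + 1) := by nlinarith
    calc ((r * m + k : ℕ) : ℝ) ≤ (((r + k) * (m + j + 1) : ℕ) : ℝ) := by exact_mod_cast h1
      _ = c * ((m + j + 1 : ℕ) : ℝ) := by push_cast; ring
  have hchoose : (((m+j).factorial : ℕ) : ℝ) ≤ 2 ^ (m+j) * (m.factorial : ℝ) * (j.factorial : ℝ) := by
    have h1 : (m+j).choose j * m.factorial * j.factorial = (m+j).factorial :=
      Nat.add_choose_mul_factorial_mul_factorial m j
    have h2 : (m+j).choose j ≤ 2 ^ (m+j) := by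
      calc (m+j).choose j ≤ ∑ i ∈ range (m+j+1), (m+j).choose i :=
            Finset.single_le_sum (fun i _ => Nat.zero_le _) (Finset.mem_range.2 (by omega))
        _ = 2 ^ (m+j) := Nat.sum_range_choose (m+j)
    calc (((m+j).factorial : ℕ) : ℝ) = ((m+j).choose j : ℝ) * m.factorial * j.factorial := by
          exact_mod_cast h1.symm
      _ ≤ 2 ^ (m+j) * (m.factorial : ℝ) * (j.factorial : ℝ) := by
          have h3 : ((m+j).choose j : ℝ) ≤ 2 ^ (m+j) := by exact_mod_cast h2
          apply mul_le_mul_of_nonneg_right _ (by positivity)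
          exact mul_le_mul_of_nonneg_right h3 (by positivity)
  have hfacsucc : (((m+j+1).factorial : ℕ) : ℝ) ≤ 2 ^ (m+j+1) * ((m+j).factorial : ℝ) := by
    rw [Nat.factorial_succ]
    push_cast
    have h4 : ((m:ℝ) + j + 1) ≤ 2 ^ (m+j+1) := by
      have := Nat.lt_two_pow_self (n := m+j+1)
      have : ((m+j+1 : ℕ) : ℝ) < ((2 ^ (m+j+1) : ℕ) : ℝ) := by exact_mod_cast this
      push_cast at this
      linarith
    have h0 : (0:ℝ) ≤ ((m+j).factorial : ℝ) := by positivity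
    nlinarith
  calc ((r * m + k : ℕ) : ℝ) ^ (m+j) ≤ (c * ((m + j + 1 : ℕ) : ℝ)) ^ (m+j) := by
        apply pow_le_pow_left₀ (by positivity) hN
    _ = c ^ (m+j) * ((m + j + 1 : ℕ) : ℝ) ^ (m+j) := mul_pow _ _ _
    _ ≤ c ^ (m+j) * (E ^ (m+j+1) * ((m+j+1).factorial : ℝ)) := by
        apply mul_le_mul_of_nonneg_left (pow_le_exp_mul_fact (m+j)) (by positivity)
    _ ≤ c ^ (m+j) * (E ^ (m+j+1) * (2 ^ (m+j+1) * ((m+j).factorial : ℝ))) := by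
        apply mul_le_mul_of_nonneg_left _ (by positivity)
        apply mul_le_mul_of_nonneg_left hfacsucc (by positivity)
    _ ≤ c ^ (m+j) * (E ^ (m+j+1) *
          (2 ^ (m+j+1) * (2 ^ (m+j) * (m.factorial : ℝ) * (j.factorial : ℝ)))) := by
        apply mul_le_mul_of_nonneg_left _ (by positivity)
        apply mul_le_mul_of_nonneg_left _ (by positivity)
        apply mul_le_mul_of_nonneg_left hchoose (by positivity)
    _ = 2 * E * (4 * E * c) ^ (m+j) * (m.factorial : ℝ) * (j.factorial : ℝ) := by
        rw [mul_pow, mul_pow]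
        have h4 : (4:ℝ) ^ (m+j) = 2 ^ (m+j) * 2 ^ (m+j) := by rw [← mul_pow]; norm_num
        rw [h4]
        ring

lemma aux (r k : ℕ) (z : ℂ)
    (hD : 4 * Real.exp 1 * ((r : ℝ) + k) * ‖z‖ ^ r < 1) :
    (Summable fun m : ℕ =>
      ‖((r * m + k : ℕ) : ℂ) ^ m / (Nat.factorial m : ℂ) *
        (z * Complex.exp (-z ^ r)) ^ (r * m + k)‖) ∧
    HasSum (fun m : ℕ =>
      ((r * m + k : ℕ) : ℂ) ^ m / (Nat.factorial m : ℂ) *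
        (z * Complex.exp (-z ^ r)) ^ (r * m + k))
      (z ^ k * (1 - (r : ℂ) * z ^ r)⁻¹) := by
  have hE1 : (1:ℝ) ≤ Real.exp 1 := one_le_E
  set E := Real.exp 1 with hE
  set q : ℝ := ‖z‖ ^ r with hq
  have hq0 : 0 ≤ q := by positivity
  set c : ℝ := (r:ℝ) + k with hc
  have hc0 : (0:ℝ) ≤ c := by positivity
  set t : ℝ := 4 * E * c * q with ht
  have ht0 : 0 ≤ t := by positivity
  have ht1 : t < 1 := hD
  set f : ℕ × ℕ → ℂ := fun p =>
    ((r * p.1 + k : ℕ) : ℂ) ^ p.1 / (Nat.factorial p.1 : ℂ) * z ^ (r * p.1 + k) *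
      ((-((r * p.1 + k : ℕ) : ℂ) * z ^ r) ^ p.2 / (Nat.factorial p.2 : ℂ)) with hf
  -- exact norm value
  have hnorm : ∀ p : ℕ × ℕ, ‖f p‖ =
      ((r * p.1 + k : ℕ) : ℝ) ^ (p.1 + p.2) * ‖z‖ ^ k * q ^ (p.1 + p.2)
        / ((Nat.factorial p.1 : ℝ) * (Nat.factorial p.2 : ℝ)) := by
    rintro ⟨m, j⟩
    simp only [hf, norm_mul, norm_div, norm_pow, norm_neg, Complex.norm_natCast]
    have hz1 : ‖z‖ ^ (r * m + k) = q ^ m * ‖z‖ ^ k := by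
      rw [pow_add, pow_mul, hq]
    rw [hz1, hq, pow_add, pow_add]
    ring
  -- bound
  have hbound : ∀ p : ℕ × ℕ, ‖f p‖ ≤ 2 * E * ‖z‖ ^ k * (t ^ p.1 * t ^ p.2) := by
    rintro ⟨m, j⟩
    rw [hnorm ⟨m, j⟩]
    have hfm : (0:ℝ) < (Nat.factorial m : ℝ) := by positivity
    have hfj : (0:ℝ) < (Nat.factorial j : ℝ) := by positivity
    rw [div_le_iff₀ (by positivity)]
    have hbb := big_bound r k m j
    have htt : t ^ m * t ^ j = (4 * E * c) ^ (m + j) * q ^ (m + j) := by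
      have ht' : t = (4*E*c)*q := by rw [ht]
      rw [ht', show ((4*E*c)*q)^m = (4*E*c)^m * q^m from mul_pow _ _ _,
        show ((4*E*c)*q)^j = (4*E*c)^j * q^j from mul_pow _ _ _, pow_add, pow_add]
      ring
    rw [htt]
    have hzk : (0:ℝ) ≤ ‖z‖ ^ k := by positivity
    have hqn : (0:ℝ) ≤ q ^ (m+j) := by positivity
    nlinarith [pow_nonneg (by positivity : (0:ℝ) ≤ 4*E*c) (m+j),
      mul_nonneg hzk hqn, mul_nonneg (mul_nonneg hzk hqn) hqn]
  -- summability of the double family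
  have hBsum : Summable (fun p : ℕ × ℕ => 2 * E * ‖z‖ ^ k * (t ^ p.1 * t ^ p.2)) :=
    ((summable_geometric_of_lt_one ht0 ht1).mul_of_nonneg
      (summable_geometric_of_lt_one ht0 ht1) (fun n => pow_nonneg ht0 n)
      (fun n => pow_nonneg ht0 n)).mul_left _
  have hFn : Summable fun p : ℕ × ℕ => ‖f p‖ :=
    Summable.of_nonneg_of_le (fun p => norm_nonneg _) hbound hBsum
  have hF : Summable f := hFn.of_norm
  set g : ℕ → ℂ := fun m =>
    ((r * m + k : ℕ) : ℂ) ^ m / (Nat.factorial m : ℂ) *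
      (z * Complex.exp (-z ^ r)) ^ (r * m + k) with hg
  have hfib : ∀ m : ℕ, HasSum (fun j => f (m, j)) (g m) := by
    intro m
    have h1 := NormedSpace.expSeries_div_hasSum_exp (-((r * m + k : ℕ) : ℂ) * z ^ r)
    have h2 := h1.mul_left
      (((r * m + k : ℕ) : ℂ) ^ m / (Nat.factorial m : ℂ) * z ^ (r * m + k))
    have h3 : ((r * m + k : ℕ) : ℂ) ^ m / (Nat.factorial m : ℂ) * z ^ (r * m + k) *
        NormedSpace.exp (-((r * m + k : ℕ) : ℂ) * z ^ r)
        = ((r * m + k : ℕ) : ℂ) ^ m / (Nat.factorial m : ℂ) *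
            (z * Complex.exp (-z ^ r)) ^ (r * m + k) := by
      rw [← Complex.exp_eq_exp_ℂ]
      rw [show -((r * m + k : ℕ) : ℂ) * z ^ r = ((r * m + k : ℕ) : ℂ) * (-(z ^ r)) by ring]
      rw [Complex.exp_nat_mul, mul_pow]
      ring
    rw [h3] at h2
    exact h2
  have hS := hF.hasSum
  set S := ∑' p, f p with hSdef
  have wayA : HasSum g S := hS.prod_fiberwise hfib
  have hgs : Summable fun m => ‖g m‖ := by
    have h1 : Summable fun m => ∑' j, ‖f (m, j)‖ := hFn.prod
    refine Summable.of_nonneg_of_le (fun m => norm_nonneg _) (fun m => ?_) h1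
    rw [← (hfib m).tsum_eq]
    exact norm_tsum_le_tsum_norm (hFn.prod_factor m)
  have wayB : HasSum (fun n => ∑ p ∈ Finset.HasAntidiagonal.antidiagonal n, f p) S := by
    have h1 : HasSum (f ∘ Finset.HasAntidiagonal.sigmaAntidiagonalEquivProd) S :=
      (Equiv.hasSum_iff _).mpr hS
    refine HasSum.sigma h1 ?_
    intro n
    have h2 := hasSum_fintype (fun c : (Finset.HasAntidiagonal.antidiagonal n : Finset (ℕ × ℕ)) => f c)
    rw [Finset.sum_coe_sort] at h2
    exact h2
  have hgeq : ∀ n : ℕ, ∑ p ∈ Finset.HasAntidiagonal.antidiagonal n, f p = z ^ k * ((r : ℂ) * z ^ r) ^ n := by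
    intro n
    rw [Finset.Nat.sum_antidiagonal_eq_sum_range_succ_mk]
    have hstep : ∀ m ∈ range (n + 1), f (m, n - m) =
        z ^ (r * n + k) / (Nat.factorial n : ℂ) *
          (((-1 : ℂ)) ^ (n - m) * (n.choose m : ℂ) * ((r : ℂ) * m + (k : ℂ)) ^ n) := by
      intro m hm
      rw [Finset.mem_range] at hm
      have hmn : m ≤ n := by omega
      have hNcast : ((r * m + k : ℕ) : ℂ) = (r : ℂ) * m + k := by push_cast; ring
      have e1 : z ^ (r * m + k) * (z ^ r) ^ (n - m) = z ^ (r * n + k) := by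
        have e0 : r * m + k + r * (n - m) = r * n + k := by
          rcases Nat.exists_eq_add_of_le hmn with ⟨d, rfl⟩
          have hd : m + d - m = d := by omega
          rw [hd]; ring
        rw [← pow_mul, ← pow_add, e0]
      have e2 : ((r : ℂ) * m + k) ^ m * ((r : ℂ) * m + k) ^ (n - m)
          = ((r : ℂ) * m + k) ^ n := by
        rw [← pow_add]; congr 1; omega
      have hfact : ((n.choose m : ℕ) : ℂ) * (m.factorial : ℂ) * ((n - m).factorial : ℂ)
          = (n.factorial : ℂ) := by exact_mod_cast Nat.choose_mul_factorial_mul_factorial hmn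
      have hm0 : (m.factorial : ℂ) ≠ 0 := by exact_mod_cast m.factorial_ne_zero
      have hnm0 : ((n - m).factorial : ℂ) ≠ 0 := by exact_mod_cast (n - m).factorial_ne_zero
      have hn0 : (n.factorial : ℂ) ≠ 0 := by exact_mod_cast n.factorial_ne_zero
      simp only [hf, hNcast]
      rw [show -((r : ℂ) * m + k) * z ^ r = -(((r : ℂ) * m + k) * z ^ r) by ring,
        neg_pow, mul_pow]
      calc ((r:ℂ)*m+k)^m / (m.factorial:ℂ) * z^(r*m+k) *
            ((-1:ℂ)^(n-m) * (((r:ℂ)*m+k)^(n-m) * (z^r)^(n-m)) / ((n-m).factorial:ℂ))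
          = (-1:ℂ)^(n-m) * (((r:ℂ)*m+k)^m * ((r:ℂ)*m+k)^(n-m)) *
              (z^(r*m+k) * (z^r)^(n-m)) / ((m.factorial:ℂ) * ((n-m).factorial:ℂ)) := by
            ring
        _ = (-1:ℂ)^(n-m) * ((r:ℂ)*m+k)^n * z^(r*n+k) /
              ((m.factorial:ℂ) * ((n-m).factorial:ℂ)) := by rw [e1, e2]
        _ = z ^ (r*n+k) / (n.factorial:ℂ) *
              ((-1:ℂ)^(n-m) * (n.choose m : ℂ) * ((r:ℂ)*m+k)^n) := by
            rw [div_mul_eq_mul_div, div_eq_div_iff (mul_ne_zero hm0 hnm0) hn0]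
            linear_combination
              (-((-1:ℂ)^(n-m) * ((r:ℂ)*m+k)^n * z^(r*n+k))) * hfact
    have hn0 : (n.factorial : ℂ) ≠ 0 := by exact_mod_cast n.factorial_ne_zero
    calc ∑ m ∈ range (n + 1), f (m, n - m)
        = ∑ m ∈ range (n + 1), z ^ (r * n + k) / (Nat.factorial n : ℂ) *
            (((-1 : ℂ)) ^ (n - m) * (n.choose m : ℂ) * ((r : ℂ) * m + (k : ℂ)) ^ n) :=
          Finset.sum_congr rfl hstep
      _ = z ^ (r * n + k) / (Nat.factorial n : ℂ) *
            ∑ m ∈ range (n + 1),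
              ((-1 : ℂ)) ^ (n - m) * (n.choose m : ℂ) * ((r : ℂ) * m + (k : ℂ)) ^ n := by
          rw [Finset.mul_sum]
      _ = z ^ (r * n + k) / (Nat.factorial n : ℂ) * ((n.factorial : ℂ) * (r : ℂ) ^ n) := by
          rw [key_id]
      _ = z ^ k * ((r : ℂ) * z ^ r) ^ n := by
          field_simp
          rw [pow_add, pow_mul, mul_pow]
          ring
  have hlt : ‖(r : ℂ) * z ^ r‖ < 1 := by
    rw [norm_mul, Complex.norm_natCast, norm_pow]
    have h1 : (r : ℝ) ≤ 4 * E * c := by nlinarith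
    nlinarith [mul_le_mul_of_nonneg_right h1 hq0]
  have hGeo : HasSum (fun n => z ^ k * ((r : ℂ) * z ^ r) ^ n)
      (z ^ k * (1 - (r : ℂ) * z ^ r)⁻¹) :=
    (hasSum_geometric_of_norm_lt_one hlt).mul_left _
  have wayB' : HasSum (fun n => z ^ k * ((r : ℂ) * z ^ r) ^ n) S := by
    simpa only [hgeq] using wayB
  have hSval : S = z ^ k * (1 - (r : ℂ) * z ^ r)⁻¹ := wayB'.unique hGeo
  exact ⟨hgs, hSval ▸ wayA⟩

/-- for every r ≥ 1 there is ε > 0 such that for ‖z‖ < ε with 1−rz^r ≠ 0,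
writing x = z·exp(−z^r): (i) for 1 ≤ k ≤ r−1 the series Σ_{m≥0} ((rm+k)^m/m!)·x^{rm+k}
converges absolutely to z^k/(1−rz^r); (ii) Σ_{m≥1} ((rm)^m/m!)·x^{rm} converges
absolutely to rz^r/(1−rz^r). -/
theorem stmt13 (r : ℕ) (hr : 1 ≤ r) :
    ∃ ε > (0 : ℝ), ∀ z : ℂ, ‖z‖ < ε → 1 - (r : ℂ) * z ^ r ≠ 0 →
      (∀ k : ℕ, 1 ≤ k → k ≤ r - 1 →
        (Summable fun m : ℕ =>
          ‖((r * m + k : ℕ) : ℂ) ^ m / (Nat.factorial m : ℂ) *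
            (z * Complex.exp (-z ^ r)) ^ (r * m + k)‖) ∧
        HasSum (fun m : ℕ =>
          ((r * m + k : ℕ) : ℂ) ^ m / (Nat.factorial m : ℂ) *
            (z * Complex.exp (-z ^ r)) ^ (r * m + k))
          (z ^ k / (1 - (r : ℂ) * z ^ r))) ∧
      (Summable fun m : ℕ =>
        ‖((r * (m + 1) : ℕ) : ℂ) ^ (m + 1) / (Nat.factorial (m + 1) : ℂ) *
          (z * Complex.exp (-z ^ r)) ^ (r * (m + 1))‖) ∧
      HasSum (fun m : ℕ =>
        ((r * (m + 1) : ℕ) : ℂ) ^ (m + 1) / (Nat.factorial (m + 1) : ℂ) *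
          (z * Complex.exp (-z ^ r)) ^ (r * (m + 1)))
        ((r : ℂ) * z ^ r / (1 - (r : ℂ) * z ^ r)) := by
  have hE1 : (1:ℝ) ≤ Real.exp 1 := one_le_E
  set E := Real.exp 1 with hE
  refine ⟨min 1 (1 / (8 * E * r + 1)), lt_min one_pos (by positivity), ?_⟩
  intro z hz hz1
  have hz0 : ‖z‖ < 1 := lt_of_lt_of_le hz (min_le_left _ _)
  have hz2 : ‖z‖ < 1 / (8 * E * r + 1) := lt_of_lt_of_le hz (min_le_right _ _)
  have hzr : ‖z‖ ^ r ≤ ‖z‖ := pow_le_of_le_one (norm_nonneg z) hz0.le (by omega)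
  have hr1 : (1:ℝ) ≤ (r:ℝ) := by exact_mod_cast hr
  have hD : ∀ k : ℕ, k ≤ r → 4 * E * ((r:ℝ) + k) * ‖z‖ ^ r < 1 := by
    intro k hk
    have hkr : (k:ℝ) ≤ (r:ℝ) := by exact_mod_cast hk
    have hk0 : (0:ℝ) ≤ (k:ℝ) := by positivity
    have hq0 : (0:ℝ) ≤ ‖z‖ ^ r := by positivity
    have hzn : (0:ℝ) ≤ ‖z‖ := norm_nonneg z
    have h8 : 4 * E * ((r:ℝ) + k) ≤ 8 * E * r := by nlinarith
    have h2 : 8 * E * r * ‖z‖ ^ r ≤ 8 * E * r * ‖z‖ :=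
      mul_le_mul_of_nonneg_left hzr (by positivity)
    have h3 : 8 * E * r * ‖z‖ < 8 * E * r * (1 / (8 * E * r + 1)) := by
      apply mul_lt_mul_of_pos_left hz2 (by positivity)
    have h4 : 8 * E * r * (1 / (8 * E * r + 1)) < 1 := by
      rw [mul_one_div, div_lt_one (by positivity)]; linarith
    nlinarith [mul_le_mul_of_nonneg_right h8 hq0]
  refine ⟨?_, ?_, ?_⟩
  · intro k hk1 hk2
    obtain ⟨hsum, hhs⟩ := aux r k z (hD k (by omega))
    exact ⟨hsum, by simpa [div_eq_mul_inv] using hhs⟩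
  · obtain ⟨hsum, -⟩ := aux r 0 z (hD 0 (Nat.zero_le r))
    have h1 : Summable fun m : ℕ =>
        ‖((r * (m+1) + 0 : ℕ) : ℂ) ^ (m+1) / (Nat.factorial (m+1) : ℂ) *
          (z * Complex.exp (-z ^ r)) ^ (r * (m+1) + 0)‖ :=
      (summable_nat_add_iff 1).mpr hsum
    simpa using h1
  · obtain ⟨-, hhs⟩ := aux r 0 z (hD 0 (Nat.zero_le r))
    have h2 := (hasSum_nat_add_iff'
      (f := fun m : ℕ => ((r * m + 0 : ℕ) : ℂ) ^ m / (Nat.factorial m : ℂ) *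
        (z * Complex.exp (-z ^ r)) ^ (r * m + 0)) 1).mpr hhs
    simp only [Nat.add_zero, Finset.sum_range_one, Nat.mul_zero, pow_zero, one_mul,
      Nat.factorial_zero, Nat.cast_one, div_one] at h2
    have hval : (1 - (r : ℂ) * z ^ r)⁻¹ - 1 = (r : ℂ) * z ^ r / (1 - (r : ℂ) * z ^ r) := by
      field_simp
      ring
    rwa [hval] at h2
end

section
/- For every α ∈ ℂ and every x ∈ ℂ with |x| < e^{−1}, exp(α·y(x)) = 1 + Σ_{m=1}^∞ (α·(m+α)^{m−1}/m!)·x^m, where y(x) = Σ_{m=1}^∞ (m^{m−1}/m!)·x^m; in particular the series on the right converges absolutely for |x| < e^{−1}. -/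
set_option maxHeartbeats 1000000


/-- The coefficients of the tree function y(x) = Σ_{m≥1} (m^{m−1}/m!)·x^m. -/
noncomputable def treeCoeff (m : ℕ) : ℂ :=
  if m = 0 then 0 else (m : ℂ) ^ (m - 1) / (Nat.factorial m : ℂ)

namespace Stmt15

open Finset Polynomial

/-- Coefficients of exp(α·y). -/
noncomputable def gc (α : ℂ) : ℕ → ℂ
  | 0 => 1
  | m + 1 => α * (((m : ℂ) + 1) + α) ^ m / (Nat.factorial (m + 1) : ℂ)

/-- Abel weight. -/
noncomputable def w (x : ℂ) : ℕ → ℂ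
  | 0 => 1
  | k + 1 => x * (x + ((k : ℂ) + 1)) ^ k

lemma neg_one_pow_sub (N k : ℕ) (h : k ≤ N) : (-1 : ℂ) ^ (N - k) = (-1) ^ N * (-1) ^ k := by
  have h1 : (-1 : ℂ) ^ k * (-1) ^ k = 1 := by
    rw [← mul_pow]; norm_num
  calc (-1 : ℂ) ^ (N - k) = (-1) ^ (N - k) * ((-1) ^ k * (-1) ^ k) := by rw [h1, mul_one]
    _ = ((-1) ^ (N - k) * (-1) ^ k) * (-1) ^ k := by ring
    _ = (-1) ^ N * (-1) ^ k := by rw [← pow_add, Nat.sub_add_cancel h]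

lemma FD (m : ℕ) : ∀ n : ℕ, n < m → ∀ x : ℂ,
    ∑ k ∈ range (m + 1), (-1 : ℂ) ^ k * (m.choose k : ℂ) * (x + k) ^ n = 0 := by
  induction m with
  | zero => intro n hn; omega
  | succ m ih =>
    intro n hn x
    set A := ∑ k ∈ range (m + 1), (-1 : ℂ) ^ k * (m.choose k : ℂ) * (x + k) ^ n with hAdef
    set B := ∑ k ∈ range (m + 1), (-1 : ℂ) ^ k * (m.choose k : ℂ) * (x + k + 1) ^ n with hBdef
    have step1 : ∑ k ∈ range (m + 2), (-1 : ℂ) ^ k * ((m + 1).choose k : ℂ) * (x + k) ^ n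
        = A - B := by
      rw [Finset.sum_range_succ' (fun k => (-1 : ℂ) ^ k * ((m + 1).choose k : ℂ) * (x + k) ^ n) (m+1)]
      have split : ∀ k ∈ range (m + 1),
          (-1 : ℂ) ^ (k+1) * ((m + 1).choose (k+1) : ℂ) * (x + (k+1 : ℕ)) ^ n
          = -((-1 : ℂ) ^ k * (m.choose k : ℂ) * (x + k + 1) ^ n)
            + (-1 : ℂ) ^ (k+1) * (m.choose (k+1) : ℂ) * (x + ((k+1 : ℕ) : ℂ)) ^ n := by
        intro k hk
        rw [Nat.choose_succ_succ]
        push_cast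
        ring
      rw [Finset.sum_congr rfl split, Finset.sum_add_distrib, Finset.sum_neg_distrib]
      have h2 : ∑ k ∈ range (m + 1), (-1 : ℂ) ^ (k+1) * (m.choose (k+1) : ℂ) * (x + ((k+1 : ℕ) : ℂ)) ^ n
          = A - x ^ n := by
        have hsum := Finset.sum_range_succ' (fun k => (-1 : ℂ) ^ k * (m.choose k : ℂ) * (x + k) ^ n) (m+1)
        have hlast : (-1 : ℂ) ^ (m+1) * (m.choose (m+1) : ℂ) * (x + ((m+1 : ℕ) : ℂ)) ^ n = 0 := by
          simp [Nat.choose_succ_self]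
        rw [Finset.sum_range_succ (fun k => (-1 : ℂ) ^ k * (m.choose k : ℂ) * (x + k) ^ n) (m+1)]
          at hsum
        rw [hlast, ← hAdef] at hsum
        have h0 : ((-1 : ℂ)) ^ 0 * (m.choose 0 : ℂ) * (x + ((0:ℕ) : ℂ)) ^ n = x ^ n := by
          simp
        rw [h0] at hsum
        linear_combination -hsum
      rw [h2]
      have h0' : ((-1 : ℂ)) ^ 0 * (((m+1).choose 0 : ℕ) : ℂ) * (x + ((0:ℕ) : ℂ)) ^ n = x ^ n := by
        simp
      rw [h0']
      ring
    rw [step1]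
    have expand : ∀ k : ℕ, (x + (k:ℂ)) ^ n - (x + k + 1) ^ n
        = -∑ j ∈ range n, (x + k) ^ j * (n.choose j : ℂ) := by
      intro k
      have := add_pow (x + (k:ℂ)) 1 n
      simp only [one_pow, mul_one] at this
      rw [this, Finset.sum_range_succ]
      simp
    have hAB : A - B = ∑ k ∈ range (m + 1), (-1 : ℂ) ^ k * (m.choose k : ℂ)
        * ((x + k) ^ n - (x + k + 1) ^ n) := by
      rw [hAdef, hBdef, ← Finset.sum_sub_distrib]
      exact Finset.sum_congr rfl fun k _ => by ring
    rw [hAB]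
    have this1 : ∀ k ∈ range (m + 1), (-1 : ℂ) ^ k * (m.choose k : ℂ)
        * ((x + k) ^ n - (x + k + 1) ^ n)
        = -∑ j ∈ range n, (n.choose j : ℂ) * ((-1 : ℂ) ^ k * (m.choose k : ℂ) * (x + k) ^ j) := by
      intro k hk
      rw [expand k, mul_neg]
      congr 1
      rw [Finset.mul_sum]
      exact Finset.sum_congr rfl fun j _ => by ring
    rw [Finset.sum_congr rfl this1, Finset.sum_neg_distrib, Finset.sum_comm]
    have hz : ∀ j ∈ range n, ∑ k ∈ range (m + 1),
        (n.choose j : ℂ) * ((-1 : ℂ) ^ k * (m.choose k : ℂ) * (x + k) ^ j) = 0 := by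
      intro j hj
      rw [← Finset.mul_sum, ih j (lt_of_lt_of_le (mem_range.1 hj) (Nat.lt_succ_iff.1 hn)) x,
        mul_zero]
    rw [Finset.sum_congr rfl hz]
    simp

lemma choose_id (n k : ℕ) (h : k ≤ n) :
    (n + 1).choose k * (n + 1 - k) = (n + 1) * n.choose k := by
  have h1 := Nat.add_one_mul_choose_eq n (n - k)
  rw [Nat.choose_symm h] at h1
  have h2 : n - k + 1 = n + 1 - k := by omega
  rw [← Nat.choose_symm (show k ≤ n + 1 by omega), ← h2]
  simpa [mul_comm] using h1.symm

lemma abelPoly (x : ℂ) (n : ℕ) :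
    ∑ k ∈ range (n + 1), C ((n.choose k : ℂ) * w x k) * (X - C (k : ℂ)) ^ (n - k)
      = (X + C x) ^ n := by
  induction n with
  | zero => simp [w]
  | succ n ih =>
    set Q : Polynomial ℂ := (X + C x) ^ (n + 1) with hQ
    set P : Polynomial ℂ :=
      ∑ k ∈ range (n + 2), C (((n+1).choose k : ℂ) * w x k) * (X - C (k : ℂ)) ^ (n + 1 - k) with hP
    have hder : derivative P = derivative Q := by
      rw [hP, hQ, derivative_pow, derivative_add, derivative_X, derivative_C,
        add_zero, mul_one, derivative_sum]
      have hterm : ∀ k ∈ range (n + 2),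
          derivative (C (((n+1).choose k : ℂ) * w x k) * (X - C (k : ℂ)) ^ (n + 1 - k))
          = C (((n+1 : ℕ) : ℂ)) * (C ((n.choose k : ℂ) * w x k) * (X - C (k : ℂ)) ^ (n - k)) := by
        intro k hk
        rw [derivative_C_mul, derivative_pow, derivative_sub, derivative_X, derivative_C,
          sub_zero, mul_one]
        rcases Nat.lt_or_ge k (n + 1) with hkn | hkn
        · have hkn' : k ≤ n := Nat.lt_succ_iff.1 hkn
          have he : n + 1 - k - 1 = n - k := by omega
          have hcast : (((n + 1).choose k : ℂ) * w x k) * ((n + 1 - k : ℕ) : ℂ)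
              = ((n + 1 : ℕ) : ℂ) * ((n.choose k : ℂ) * w x k) := by
            have hnat : (((n + 1).choose k * (n + 1 - k) : ℕ) : ℂ)
                = (((n + 1) * n.choose k : ℕ) : ℂ) := by
              exact_mod_cast congrArg (fun t : ℕ => (t : ℂ)) (choose_id n k hkn')
            push_cast at hnat ⊢
            ring_nf
            ring_nf at hnat
            linear_combination (w x k) * hnat
          rw [he, ← mul_assoc, ← C_mul, hcast, C_mul, mul_assoc]
        · have hk1 : k = n + 1 := by
            have := mem_range.1 hk; omega
          subst hk1
          simp [Nat.choose_succ_self, Nat.sub_self]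
      rw [Finset.sum_congr rfl hterm, ← Finset.mul_sum, Finset.sum_range_succ]
      have hlastz : C ((n.choose (n+1) : ℂ) * w x (n+1)) * (X - C (((n+1):ℕ) : ℂ)) ^ (n - (n+1))
          = 0 := by
        simp [Nat.choose_succ_self]
      rw [hlastz, add_zero, ih]
      norm_num
    have hPeval : Polynomial.eval (-x) P = 0 := by
      rw [hP, eval_finset_sum]
      have hterm2 : ∀ k ∈ range (n + 2),
          eval (-x) (C (((n+1).choose k : ℂ) * w x k) * (X - C (k : ℂ)) ^ (n + 1 - k))
          = x * (-1 : ℂ) ^ (n+1) * ((-1 : ℂ) ^ k * (((n+1).choose k : ℕ) : ℂ) * (x + k) ^ n) := by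
        intro k hk
        have hk' : k ≤ n + 1 := by have := mem_range.1 hk; omega
        rw [eval_mul, eval_C, eval_pow, eval_sub, eval_X, eval_C]
        have hneg : (-x - (k : ℂ)) = -(x + k) := by ring
        rw [hneg, neg_pow, neg_one_pow_sub (n+1) k hk']
        cases k with
        | zero => simp [w]; ring
        | succ j =>
          have hj : j ≤ n := by have := mem_range.1 hk; omega
          have hje : n + 1 - (j + 1) = n - j := by omega
          rw [hje]
          show ((((n+1).choose (j+1) : ℕ) : ℂ) * (x * (x + ((j : ℂ) + 1)) ^ j))
              * ((-1 : ℂ) ^ (n+1) * (-1 : ℂ) ^ (j+1) * (x + ((j+1 : ℕ) : ℂ)) ^ (n - j)) = _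
          have hc : ((j + 1 : ℕ) : ℂ) = (j : ℂ) + 1 := by push_cast; ring
          rw [hc]
          have hpow : (x + ((j : ℂ) + 1)) ^ (n - j) * (x + ((j : ℂ) + 1)) ^ j
              = (x + ((j : ℂ) + 1)) ^ n := by
            rw [← pow_add]; congr 1; omega
          linear_combination ((-1 : ℂ) ^ (n+1) * (-1 : ℂ) ^ (j+1)
            * (((n+1).choose (j+1) : ℕ) : ℂ) * x) * hpow
      rw [Finset.sum_congr rfl hterm2, ← Finset.mul_sum, FD (n+1) n (Nat.lt_succ_self n) x,
        mul_zero]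
    have hQeval : Polynomial.eval (-x) Q = 0 := by
      rw [hQ]
      simp
    have hsub : derivative (P - Q) = 0 := by rw [derivative_sub, hder, sub_self]
    have hc := Polynomial.eq_C_of_derivative_eq_zero hsub
    have hc0 : (P - Q).coeff 0 = 0 := by
      have he := congrArg (Polynomial.eval (-x)) hc
      rw [eval_sub, hPeval, hQeval, eval_C] at he
      simpa using he.symm
    rw [hc0, map_zero, sub_eq_zero] at hc
    exact hc

lemma abelEval (x t : ℂ) (n : ℕ) :
    ∑ k ∈ range (n + 1), (n.choose k : ℂ) * w x k * (t - k) ^ (n - k) = (t + x) ^ n := by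
  have h := congrArg (Polynomial.eval t) (abelPoly x n)
  rw [eval_finset_sum] at h
  simp only [eval_mul, eval_pow, eval_sub, eval_add, eval_X, eval_C] at h
  simpa [mul_assoc] using h

lemma cauchyCoeff (α : ℂ) (n : ℕ) :
    ∑ p ∈ range (n + 1), (α * ((p : ℂ) + 1) ^ p / (Nat.factorial p : ℂ)) * gc α (n - p)
      = α * ((n : ℂ) + 1 + α) ^ n / (Nat.factorial n : ℂ) := by
  rw [← Finset.sum_range_reflect]
  have hterm : ∀ j ∈ range (n + 1),
      (α * (((n + 1 - 1 - j : ℕ) : ℂ) + 1) ^ (n + 1 - 1 - j)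
          / (Nat.factorial (n + 1 - 1 - j) : ℂ)) * gc α (n - (n + 1 - 1 - j))
      = (α / (Nat.factorial n : ℂ))
          * ((n.choose j : ℂ) * w α j * (((n : ℂ) + 1) - j) ^ (n - j)) := by
    intro j hj
    have hjn : j ≤ n := Nat.lt_succ_iff.1 (mem_range.1 hj)
    have h1 : n + 1 - 1 - j = n - j := by omega
    have h2 : n - (n - j) = j := by omega
    rw [h1, h2]
    have hcast : (((n - j : ℕ) : ℂ) + 1) = ((n : ℂ) + 1) - j := by
      have : ((n - j : ℕ) : ℂ) = (n : ℂ) - j := by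
        push_cast [Nat.cast_sub hjn]; ring
      rw [this]; ring
    rw [hcast]
    have hfacn : ((Nat.factorial n : ℕ) : ℂ) ≠ 0 :=
      Nat.cast_ne_zero.2 (Nat.factorial_ne_zero n)
    have hfacj : ((Nat.factorial (n - j) : ℕ) : ℂ) ≠ 0 :=
      Nat.cast_ne_zero.2 (Nat.factorial_ne_zero _)
    cases j with
    | zero =>
      simp only [gc, w, Nat.sub_zero, Nat.choose_zero_right, Nat.cast_one]
      field_simp
    | succ i =>
      simp only [gc, w]
      have hfaci : ((Nat.factorial (i + 1) : ℕ) : ℂ) ≠ 0 :=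
        Nat.cast_ne_zero.2 (Nat.factorial_ne_zero _)
      have hnat : (((n.choose (i+1)) * Nat.factorial (i+1) * Nat.factorial (n - (i+1)) : ℕ) : ℂ)
          = ((Nat.factorial n : ℕ) : ℂ) := by
        exact_mod_cast congrArg (fun t : ℕ => (t : ℂ))
          (Nat.choose_mul_factorial_mul_factorial hjn)
      push_cast at hnat
      have hca : (α + ((i : ℂ) + 1)) = (((i : ℂ) + 1) + α) := by ring
      rw [hca]
      field_simp
      push_cast
      linear_combination (-(α * α * (((i:ℂ)+1+α))^i * (((n:ℂ)-(i:ℂ)))^(n-(i+1)))) * hnat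
  rw [Finset.sum_congr rfl hterm, ← Finset.mul_sum, abelEval α ((n : ℂ) + 1) n]
  ring


lemma pow_factorial_aux (s : ℕ) : ((s : ℝ) + 1) ^ (s + 1) / (Nat.factorial (s + 1) : ℝ)
    ≤ Real.exp 1 ^ (s + 1) := by
  have h := Real.pow_div_factorial_le_exp (x := ((s : ℝ) + 1)) (by positivity) (s + 1)
  calc ((s : ℝ) + 1) ^ (s + 1) / (Nat.factorial (s + 1) : ℝ)
      ≤ Real.exp ((s : ℝ) + 1) := by exact_mod_cast h
    _ = Real.exp 1 ^ (s + 1) := by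
        rw [← Real.exp_nat_mul]
        push_cast
        ring_nf

lemma norm_treeCoeff (m : ℕ) : ‖treeCoeff m‖ ≤ Real.exp 1 ^ m := by
  cases m with
  | zero => simp [treeCoeff]
  | succ s =>
    rw [treeCoeff]
    simp only [Nat.succ_ne_zero, if_false]
    rw [norm_div, norm_pow]
    have h1 : ‖((s + 1 : ℕ) : ℂ)‖ = (s : ℝ) + 1 := by
      rw [Complex.norm_natCast]; push_cast; ring
    have h2 : ‖((Nat.factorial (s + 1) : ℕ) : ℂ)‖ = (Nat.factorial (s + 1) : ℝ) := by
      rw [Complex.norm_natCast]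
    rw [h1, h2]
    have h3 : ((s : ℝ) + 1) ^ (s + 1 - 1) ≤ ((s : ℝ) + 1) ^ (s + 1) := by
      apply pow_le_pow_right₀ (by linarith [Nat.cast_nonneg (α := ℝ) s]) (by omega)
    have h4 : (0 : ℝ) < (Nat.factorial (s + 1) : ℝ) := by
      exact_mod_cast Nat.factorial_pos (s + 1)
    calc ((s : ℝ) + 1) ^ (s + 1 - 1) / (Nat.factorial (s + 1) : ℝ)
        ≤ ((s : ℝ) + 1) ^ (s + 1) / (Nat.factorial (s + 1) : ℝ) := by gcongr
      _ ≤ Real.exp 1 ^ (s + 1) := pow_factorial_aux s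

lemma shifted_pow_le (s : ℕ) (a : ℝ) (ha : 0 ≤ a) :
    ((s : ℝ) + 1 + a) ^ s ≤ ((s : ℝ) + 1) ^ s * Real.exp a := by
  have hs1 : (0 : ℝ) < (s : ℝ) + 1 := by positivity
  have h1 : (s : ℝ) + 1 + a = ((s : ℝ) + 1) * (1 + a / ((s : ℝ) + 1)) := by
    field_simp
  have h2 : 1 + a / ((s : ℝ) + 1) ≤ Real.exp (a / ((s : ℝ) + 1)) := by
    have := Real.add_one_le_exp (a / ((s : ℝ) + 1))
    linarith
  calc ((s : ℝ) + 1 + a) ^ s = ((s : ℝ) + 1) ^ s * (1 + a / ((s : ℝ) + 1)) ^ s := by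
        rw [h1, mul_pow]
    _ ≤ ((s : ℝ) + 1) ^ s * Real.exp (a / ((s : ℝ) + 1)) ^ s := by
        gcongr
    _ = ((s : ℝ) + 1) ^ s * Real.exp ((s : ℝ) * (a / ((s : ℝ) + 1))) := by
        rw [← Real.exp_nat_mul]
    _ ≤ ((s : ℝ) + 1) ^ s * Real.exp a := by
        gcongr
        have heq : (s : ℝ) * (a / ((s : ℝ) + 1)) = a * ((s : ℝ) / ((s : ℝ) + 1)) := by ring
        rw [heq]
        exact mul_le_of_le_one_right ha (by rw [div_le_one hs1]; linarith)

lemma norm_gc (α : ℂ) (m : ℕ) :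
    ‖gc α m‖ ≤ (1 + ‖α‖) * Real.exp ‖α‖ * Real.exp 1 ^ m := by
  have ha : (0 : ℝ) ≤ ‖α‖ := norm_nonneg α
  have hea : (1 : ℝ) ≤ Real.exp ‖α‖ := by
    rw [show (1:ℝ) = Real.exp 0 by simp]
    exact Real.exp_le_exp.2 ha
  cases m with
  | zero =>
    show ‖(1 : ℂ)‖ ≤ _
    rw [norm_one, pow_zero, mul_one]
    nlinarith
  | succ s =>
    show ‖α * (((s : ℂ) + 1) + α) ^ s / (Nat.factorial (s + 1) : ℂ)‖ ≤ _
    rw [norm_div, norm_mul, norm_pow, Complex.norm_natCast]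
    have h4 : (0 : ℝ) < (Nat.factorial (s + 1) : ℝ) := by
      exact_mod_cast Nat.factorial_pos (s + 1)
    have hb : ‖((s : ℂ) + 1) + α‖ ≤ ((s : ℝ) + 1) + ‖α‖ := by
      calc ‖((s : ℂ) + 1) + α‖ ≤ ‖((s : ℂ) + 1)‖ + ‖α‖ := norm_add_le _ _
        _ = ((s : ℝ) + 1) + ‖α‖ := by
            congr 1
            rw [show ((s : ℂ) + 1) = ((s + 1 : ℕ) : ℂ) by push_cast; ring, Complex.norm_natCast]
            push_cast; ring
    calc ‖α‖ * ‖((s : ℂ) + 1) + α‖ ^ s / (Nat.factorial (s + 1) : ℝ)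
        ≤ ‖α‖ * (((s : ℝ) + 1) + ‖α‖) ^ s / (Nat.factorial (s + 1) : ℝ) := by
          gcongr
      _ ≤ ‖α‖ * (((s : ℝ) + 1) ^ s * Real.exp ‖α‖) / (Nat.factorial (s + 1) : ℝ) := by
          gcongr
          exact shifted_pow_le s ‖α‖ ha
      _ ≤ ‖α‖ * (((s : ℝ) + 1) ^ (s + 1) * Real.exp ‖α‖) / (Nat.factorial (s + 1) : ℝ) := by
          gcongr
          · linarith [Nat.cast_nonneg (α := ℝ) s]
          · omega
      _ = ‖α‖ * Real.exp ‖α‖ * (((s : ℝ) + 1) ^ (s + 1) / (Nat.factorial (s + 1) : ℝ)) := by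
          ring
      _ ≤ ‖α‖ * Real.exp ‖α‖ * Real.exp 1 ^ (s + 1) := by
          gcongr
          exact pow_factorial_aux s
      _ ≤ (1 + ‖α‖) * Real.exp ‖α‖ * Real.exp 1 ^ (s + 1) := by
          gcongr
          linarith

lemma exp_mul_lt (x : ℂ) (hx : ‖x‖ < Real.exp (-1)) : Real.exp 1 * ‖x‖ < 1 := by
  calc Real.exp 1 * ‖x‖ < Real.exp 1 * Real.exp (-1) := by
        apply mul_lt_mul_of_pos_left hx (Real.exp_pos 1)
    _ = 1 := by rw [← Real.exp_add]; norm_num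

lemma summable_aux {c : ℕ → ℂ} {Cb : ℝ} (hC : ∀ m, ‖c m‖ ≤ Cb * Real.exp 1 ^ m)
    {x : ℂ} (hx : ‖x‖ < Real.exp (-1)) : Summable (fun m => ‖c m * x ^ m‖) := by
  have hq : Real.exp 1 * ‖x‖ < 1 := exp_mul_lt x hx
  have hq0 : 0 ≤ Real.exp 1 * ‖x‖ := by positivity
  refine Summable.of_nonneg_of_le (fun m => norm_nonneg _) (fun m => ?_)
    ((summable_geometric_of_lt_one hq0 hq).mul_left Cb)
  · rw [norm_mul, norm_pow, mul_pow]
    calc ‖c m‖ * ‖x‖ ^ m ≤ (Cb * Real.exp 1 ^ m) * ‖x‖ ^ m := by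
          gcongr
          exact hC m
      _ = Cb * (Real.exp 1 ^ m * ‖x‖ ^ m) := by ring

lemma summable_u {Cb r : ℝ} (hr0 : 0 < r) (hr1 : r < Real.exp (-1)) :
    Summable (fun m : ℕ => Cb * Real.exp 1 ^ m * ((m : ℝ) * r ^ (m - 1))) := by
  set q : ℝ := Real.exp 1 * r with hqdef
  have hq1 : q < 1 := by
    calc q < Real.exp 1 * Real.exp (-1) := by
          apply mul_lt_mul_of_pos_left hr1 (Real.exp_pos 1)
      _ = 1 := by rw [← Real.exp_add]; norm_num
  have hq0 : 0 ≤ q := by positivity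
  apply (summable_nat_add_iff 1).mp
  have base : Summable (fun p : ℕ => (p : ℝ) ^ 1 * q ^ p) :=
    summable_pow_mul_geometric_of_norm_lt_one 1 (by rwa [Real.norm_of_nonneg hq0])
  have geo : Summable (fun p : ℕ => q ^ p) := summable_geometric_of_lt_one hq0 hq1
  have sum1 : Summable (fun p : ℕ => ((p : ℝ) + 1) * q ^ p) := by
    apply Summable.congr (base.add geo)
    intro p
    simp [pow_one]
    ring
  apply Summable.congr (sum1.mul_left (Cb * Real.exp 1))
  intro p
  have h1 : Real.exp 1 ^ (p + 1) = Real.exp 1 * Real.exp 1 ^ p := by ring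
  have h2 : (p + 1 : ℕ) - 1 = p := by omega
  rw [h1, h2]
  push_cast
  rw [hqdef, mul_pow]
  ring

lemma hasDerivAt_series {c : ℕ → ℂ} {Cb : ℝ} (hC : ∀ m, ‖c m‖ ≤ Cb * Real.exp 1 ^ m)
    {x : ℂ} (hx : ‖x‖ < Real.exp (-1)) :
    HasDerivAt (fun z => ∑' m, c m * z ^ m) (∑' m, c m * ((m : ℂ) * x ^ (m - 1))) x := by
  set r : ℝ := (‖x‖ + Real.exp (-1)) / 2 with hrdef
  have hxr : ‖x‖ < r := by rw [hrdef]; linarith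
  have hr0 : 0 < r := lt_of_le_of_lt (norm_nonneg x) hxr
  have hr1 : r < Real.exp (-1) := by rw [hrdef]; linarith
  have hCb : 0 ≤ Cb := le_trans (norm_nonneg (c 0)) (by simpa using hC 0)
  refine hasDerivAt_tsum_of_isPreconnected
    (u := fun m : ℕ => Cb * Real.exp 1 ^ m * ((m : ℝ) * r ^ (m - 1)))
    (summable_u hr0 hr1) Metric.isOpen_ball ((convex_ball (0:ℂ) r).isPreconnected)
    (fun m z _ => (hasDerivAt_pow m z).const_mul (c m))
    (fun m z hz => ?_) (Metric.mem_ball_self hr0) ?_ (mem_ball_zero_iff.2 hxr)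
  · have hzr : ‖z‖ ≤ r := le_of_lt (mem_ball_zero_iff.1 hz)
    rw [norm_mul, norm_mul, norm_pow, Complex.norm_natCast]
    calc ‖c m‖ * ((m : ℝ) * ‖z‖ ^ (m - 1))
        ≤ (Cb * Real.exp 1 ^ m) * ((m : ℝ) * r ^ (m - 1)) := by
          gcongr
          exact hC m
      _ = Cb * Real.exp 1 ^ m * ((m : ℝ) * r ^ (m - 1)) := by ring
  · apply summable_of_ne_finset_zero (s := {0})
    intro m hm
    have : m ≠ 0 := by simpa using hm
    simp [zero_pow this]

lemma pow_factorial_aux' (s : ℕ) :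
    ((s : ℝ) + 1) ^ s / (Nat.factorial s : ℝ) ≤ Real.exp 1 ^ (s + 1) := by
  have h := pow_factorial_aux s
  have heq : ((s : ℝ) + 1) ^ s / (Nat.factorial s : ℝ)
      = ((s : ℝ) + 1) ^ (s + 1) / (Nat.factorial (s + 1) : ℝ) := by
    rw [Nat.factorial_succ]
    have h1 : (0:ℝ) < (Nat.factorial s : ℝ) := by exact_mod_cast Nat.factorial_pos s
    have h2 : (0:ℝ) < (s:ℝ) + 1 := by positivity
    push_cast
    rw [pow_succ]
    field_simp
  rw [heq]; exact h

lemma norm_ty (α : ℂ) (p : ℕ) :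
    ‖α * ((p : ℂ) + 1) ^ p / (Nat.factorial p : ℂ)‖ ≤ ‖α‖ * Real.exp 1 * Real.exp 1 ^ p := by
  rw [norm_div, norm_mul, norm_pow, Complex.norm_natCast]
  have h1 : ‖(p : ℂ) + 1‖ = (p : ℝ) + 1 := by
    rw [show ((p : ℂ) + 1) = ((p + 1 : ℕ) : ℂ) by push_cast; ring, Complex.norm_natCast]
    push_cast; ring
  rw [h1]
  have h2 : (0:ℝ) < (Nat.factorial p : ℝ) := by exact_mod_cast Nat.factorial_pos p
  calc ‖α‖ * ((p : ℝ) + 1) ^ p / (Nat.factorial p : ℝ)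
      = ‖α‖ * (((p : ℝ) + 1) ^ p / (Nat.factorial p : ℝ)) := by ring
    _ ≤ ‖α‖ * Real.exp 1 ^ (p + 1) := by
        gcongr
        exact pow_factorial_aux' p
    _ = ‖α‖ * Real.exp 1 * Real.exp 1 ^ p := by rw [pow_succ]; ring

lemma norm_tg (α : ℂ) (n : ℕ) :
    ‖α * ((n : ℂ) + 1 + α) ^ n / (Nat.factorial n : ℂ)‖
      ≤ ‖α‖ * Real.exp ‖α‖ * Real.exp 1 * Real.exp 1 ^ n := by
  rw [norm_div, norm_mul, norm_pow, Complex.norm_natCast]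
  have h2 : (0:ℝ) < (Nat.factorial n : ℝ) := by exact_mod_cast Nat.factorial_pos n
  have hb : ‖(n : ℂ) + 1 + α‖ ≤ ((n : ℝ) + 1) + ‖α‖ := by
    calc ‖(n : ℂ) + 1 + α‖ ≤ ‖(n : ℂ) + 1‖ + ‖α‖ := norm_add_le _ _
      _ = ((n : ℝ) + 1) + ‖α‖ := by
          congr 1
          rw [show ((n : ℂ) + 1) = ((n + 1 : ℕ) : ℂ) by push_cast; ring, Complex.norm_natCast]
          push_cast; ring
  calc ‖α‖ * ‖(n : ℂ) + 1 + α‖ ^ n / (Nat.factorial n : ℝ)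
      ≤ ‖α‖ * (((n : ℝ) + 1) + ‖α‖) ^ n / (Nat.factorial n : ℝ) := by
        gcongr
      _ ≤ ‖α‖ * (((n : ℝ) + 1) ^ n * Real.exp ‖α‖) / (Nat.factorial n : ℝ) := by
        gcongr
        exact shifted_pow_le n ‖α‖ (norm_nonneg α)
      _ = ‖α‖ * Real.exp ‖α‖ * (((n : ℝ) + 1) ^ n / (Nat.factorial n : ℝ)) := by ring
      _ ≤ ‖α‖ * Real.exp ‖α‖ * Real.exp 1 ^ (n + 1) := by
        gcongr
        exact pow_factorial_aux' n
      _ = ‖α‖ * Real.exp ‖α‖ * Real.exp 1 * Real.exp 1 ^ n := by rw [pow_succ]; ring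

lemma norm_treeCoeff' (m : ℕ) : ‖treeCoeff m‖ ≤ 1 * Real.exp 1 ^ m := by
  simpa using norm_treeCoeff m

lemma summable_deriv_terms {c : ℕ → ℂ} {Cb : ℝ} (hC : ∀ m, ‖c m‖ ≤ Cb * Real.exp 1 ^ m)
    {x : ℂ} (hx : ‖x‖ < Real.exp (-1)) :
    Summable (fun m => c m * ((m : ℂ) * x ^ (m - 1))) := by
  set r : ℝ := (‖x‖ + Real.exp (-1)) / 2 with hrdef
  have hxr : ‖x‖ ≤ r := by rw [hrdef]; linarith
  have hr0 : 0 < r := lt_of_le_of_lt (norm_nonneg x) (by rw [hrdef]; linarith)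
  have hr1 : r < Real.exp (-1) := by rw [hrdef]; linarith
  apply Summable.of_norm_bounded (summable_u (Cb := Cb) hr0 hr1)
  intro m
  rw [norm_mul, norm_mul, norm_pow, Complex.norm_natCast]
  calc ‖c m‖ * ((m : ℝ) * ‖x‖ ^ (m - 1))
      ≤ (Cb * Real.exp 1 ^ m) * ((m : ℝ) * r ^ (m - 1)) := by
        have hCb : 0 ≤ Cb * Real.exp 1 ^ m := le_trans (norm_nonneg (c m)) (hC m)
        gcongr
        all_goals first | exact hC m | exact hxr | positivity | exact hCb
    _ = Cb * Real.exp 1 ^ m * ((m : ℝ) * r ^ (m - 1)) := by ring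

lemma fac_succ_cast (m : ℕ) :
    ((Nat.factorial (m + 1) : ℕ) : ℂ) = ((m : ℂ) + 1) * ((Nat.factorial m : ℕ) : ℂ) := by
  rw [Nat.factorial_succ]; push_cast; ring

lemma shift_Y (α : ℂ) {x : ℂ} (hx : ‖x‖ < Real.exp (-1)) :
    α * (∑' m, treeCoeff m * ((m : ℂ) * x ^ (m - 1)))
      = ∑' p : ℕ, (α * ((p : ℂ) + 1) ^ p / (Nat.factorial p : ℂ)) * x ^ p := by
  have hs : Summable (fun m => treeCoeff m * ((m : ℂ) * x ^ (m - 1))) :=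
    summable_deriv_terms norm_treeCoeff' hx
  rw [← tsum_mul_left, Summable.tsum_eq_zero_add (hs.mul_left α)]
  have h0 : α * (treeCoeff 0 * (((0:ℕ) : ℂ) * x ^ (0 - 1))) = 0 := by
    simp [treeCoeff]
  rw [h0, zero_add]
  apply tsum_congr
  intro m
  have hfm : ((Nat.factorial m : ℕ) : ℂ) ≠ 0 := Nat.cast_ne_zero.2 (Nat.factorial_ne_zero m)
  have hfm1 : ((Nat.factorial (m+1) : ℕ) : ℂ) ≠ 0 := Nat.cast_ne_zero.2 (Nat.factorial_ne_zero _)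
  rw [treeCoeff]
  simp only [Nat.succ_ne_zero, if_false, Nat.add_sub_cancel]
  rw [fac_succ_cast m]
  have hm1 : ((m + 1 : ℕ) : ℂ) = (m : ℂ) + 1 := by push_cast; ring
  rw [hm1]
  have hne : ((m : ℂ) + 1) ≠ 0 := by
    intro h
    have := congrArg Complex.re h
    push_cast at this
    simp at this
    linarith [Nat.cast_nonneg (α := ℝ) m]
  field_simp

lemma shift_G (α : ℂ) {x : ℂ} (hx : ‖x‖ < Real.exp (-1)) :
    (∑' m, gc α m * ((m : ℂ) * x ^ (m - 1)))
      = ∑' n : ℕ, (α * ((n : ℂ) + 1 + α) ^ n / (Nat.factorial n : ℂ)) * x ^ n := by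
  have hs : Summable (fun m => gc α m * ((m : ℂ) * x ^ (m - 1))) :=
    summable_deriv_terms (norm_gc α) hx
  rw [Summable.tsum_eq_zero_add hs]
  have h0 : gc α 0 * (((0:ℕ) : ℂ) * x ^ (0 - 1)) = 0 := by simp [gc]
  rw [h0, zero_add]
  apply tsum_congr
  intro m
  have hfm : ((Nat.factorial m : ℕ) : ℂ) ≠ 0 := Nat.cast_ne_zero.2 (Nat.factorial_ne_zero m)
  show (α * (((m : ℂ) + 1) + α) ^ m / (Nat.factorial (m + 1) : ℂ)) * (((m+1 : ℕ) : ℂ) * x ^ m)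
      = _
  rw [fac_succ_cast m]
  have hm1 : ((m + 1 : ℕ) : ℂ) = (m : ℂ) + 1 := by push_cast; ring
  rw [hm1]
  have hne : ((m : ℂ) + 1) ≠ 0 := by
    intro h
    have := congrArg Complex.re h
    push_cast at this
    simp at this
    linarith [Nat.cast_nonneg (α := ℝ) m]
  have hgoal : (α * (((m : ℂ) + 1) + α) ^ m) / (((m : ℂ) + 1) * (Nat.factorial m : ℂ))
      * (((m : ℂ) + 1) * x ^ m)
      = (α * ((m : ℂ) + 1 + α) ^ m / (Nat.factorial m : ℂ)) * x ^ m := by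
    field_simp
  exact hgoal

lemma cauchy_step (α : ℂ) {x : ℂ} (hx : ‖x‖ < Real.exp (-1)) :
    (∑' p : ℕ, (α * ((p : ℂ) + 1) ^ p / (Nat.factorial p : ℂ)) * x ^ p)
      * (∑' q : ℕ, gc α q * x ^ q)
      = ∑' n : ℕ, (α * ((n : ℂ) + 1 + α) ^ n / (Nat.factorial n : ℂ)) * x ^ n := by
  have hf : Summable (fun p : ℕ => ‖(α * ((p : ℂ) + 1) ^ p / (Nat.factorial p : ℂ)) * x ^ p‖) :=
    summable_aux (norm_ty α) hx
  have hg : Summable (fun q => ‖gc α q * x ^ q‖) := summable_aux (norm_gc α) hx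
  rw [tsum_mul_tsum_eq_tsum_sum_antidiagonal_of_summable_norm hf hg]
  apply tsum_congr
  intro n
  rw [Finset.Nat.sum_antidiagonal_eq_sum_range_succ_mk]
  have hterm : ∀ k ∈ range (n + 1),
      (α * ((k : ℂ) + 1) ^ k / (Nat.factorial k : ℂ)) * x ^ k * (gc α (n - k) * x ^ (n - k))
      = ((α * ((k : ℂ) + 1) ^ k / (Nat.factorial k : ℂ)) * gc α (n - k)) * x ^ n := by
    intro k hk
    have hkn : k ≤ n := Nat.lt_succ_iff.1 (mem_range.1 hk)
    have hpow : x ^ k * x ^ (n - k) = x ^ n := by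
      rw [← pow_add]; congr 1; omega
    calc (α * ((k : ℂ) + 1) ^ k / (Nat.factorial k : ℂ)) * x ^ k * (gc α (n - k) * x ^ (n - k))
        = ((α * ((k : ℂ) + 1) ^ k / (Nat.factorial k : ℂ)) * gc α (n - k))
            * (x ^ k * x ^ (n - k)) := by ring
      _ = _ := by rw [hpow]
  rw [Finset.sum_congr rfl hterm, ← Finset.sum_mul, cauchyCoeff α n]

noncomputable def Yf (z : ℂ) : ℂ := ∑' m, treeCoeff m * z ^ m
noncomputable def Gf (α z : ℂ) : ℂ := ∑' m, gc α m * z ^ m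

lemma hasDerivAt_h (α : ℂ) (z : ℂ) (hz : ‖z‖ < Real.exp (-1)) :
    HasDerivAt (fun y => Complex.exp (-(α * Yf y)) * Gf α y) 0 z := by
  have hYd : HasDerivAt Yf (∑' m, treeCoeff m * ((m : ℂ) * z ^ (m - 1))) z := by
    unfold Yf
    exact hasDerivAt_series norm_treeCoeff' hz
  have hGd : HasDerivAt (Gf α) (∑' m, gc α m * ((m : ℂ) * z ^ (m - 1))) z := by
    unfold Gf
    exact hasDerivAt_series (norm_gc α) hz
  set Dy := ∑' m, treeCoeff m * ((m : ℂ) * z ^ (m - 1)) with hDy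
  set Dg := ∑' m, gc α m * ((m : ℂ) * z ^ (m - 1)) with hDg
  have hkey : Dg = α * Dy * Gf α z := by
    rw [hDg, shift_G α hz, ← cauchy_step α hz, hDy, shift_Y α hz]
    rfl
  have h1 : HasDerivAt (fun y => -(α * Yf y)) (-(α * Dy)) z := (hYd.const_mul α).neg
  have h2 := h1.cexp
  have h3 := h2.mul hGd
  convert h3 using 1
  · rfl
  · rfl
  · rfl
  rw [hkey]
  ring

lemma Yf_zero : Yf 0 = 0 := by
  unfold Yf
  rw [tsum_eq_single 0 (by intro m hm; simp [zero_pow hm])]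
  simp [treeCoeff]

lemma Gf_zero (α : ℂ) : Gf α 0 = 1 := by
  unfold Gf
  rw [tsum_eq_single 0 (by intro m hm; simp [zero_pow hm])]
  simp [gc]

lemma main_eq (α : ℂ) {x : ℂ} (hx : ‖x‖ < Real.exp (-1)) :
    Complex.exp (α * Yf x) = Gf α x := by
  set f : ℝ → ℂ := fun t => Complex.exp (-(α * Yf ((t : ℂ) * x))) * Gf α ((t : ℂ) * x) with hf
  have hd : ∀ t : ℝ, t ∈ Set.Icc (0:ℝ) 1 → HasDerivAt f 0 t := by
    intro t ht
    have habs : |t| ≤ 1 := by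
      rw [abs_le]; exact ⟨by linarith [ht.1], ht.2⟩
    have hzx : ‖(t : ℂ) * x‖ < Real.exp (-1) := by
      rw [norm_mul, Complex.norm_real]
      calc ‖t‖ * ‖x‖ ≤ 1 * ‖x‖ := by
            gcongr
            rwa [Real.norm_eq_abs]
        _ = ‖x‖ := one_mul _
        _ < _ := hx
    have hh := hasDerivAt_h α ((t : ℂ) * x) hzx
    have hmul : HasDerivAt (fun z : ℂ => z * x) x (t : ℂ) := by
      simpa using (hasDerivAt_id ((t : ℂ))).mul_const x
    have hcomp := HasDerivAt.comp (t : ℂ) hh hmul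
    have hre := hcomp.comp_ofReal
    simp only [Function.comp] at hre
    convert hre using 1
    simp
  have hcont : ∀ t ∈ Set.Icc (0:ℝ) 1, f t = f 0 := by
    apply constant_of_derivWithin_zero
    · intro t ht
      exact ((hd t ht).differentiableAt).differentiableWithinAt
    · intro t ht
      have ht' : t ∈ Set.Icc (0:ℝ) 1 := Set.mem_Icc_of_Ico ht
      rw [((hd t ht').hasDerivWithinAt).derivWithin (uniqueDiffOn_Icc one_pos t ht')]
  have h1 := hcont 1 (by norm_num)
  have hf1 : f 1 = Complex.exp (-(α * Yf x)) * Gf α x := by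
    rw [hf]
    norm_num
  have hf0 : f 0 = 1 := by
    rw [hf]
    norm_num [Yf_zero, Gf_zero]
  rw [hf1, hf0] at h1
  have hexp := Complex.exp_ne_zero (α * Yf x)
  rw [Complex.exp_neg] at h1
  field_simp at h1
  exact h1.symm

end Stmt15

open Stmt15 in
/-- for every α ∈ ℂ and ‖x‖ < e^{−1},
exp(α·y(x)) = 1 + Σ_{m≥1} (α·(m+α)^{m−1}/m!)·x^m, the series converging absolutely,
where y(x) = Σ_{m≥1} (m^{m−1}/m!)·x^m.  (The sum on the right is written with the
index shifted by one: the summand for m corresponds to the original index m+1.) -/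
theorem stmt15 (α : ℂ) (x : ℂ) (hx : ‖x‖ < Real.exp (-1)) :
    (Summable fun m : ℕ =>
      ‖α * (((m : ℂ) + 1) + α) ^ m / (Nat.factorial (m + 1) : ℂ) * x ^ (m + 1)‖) ∧
    Complex.exp (α * ∑' m : ℕ, treeCoeff m * x ^ m) =
      1 + ∑' m : ℕ,
        α * (((m : ℂ) + 1) + α) ^ m / (Nat.factorial (m + 1) : ℂ) * x ^ (m + 1) := by
  have hg : Summable (fun m : ℕ => ‖gc α m * x ^ m‖) := summable_aux (norm_gc α) hx
  have hshift : Summable (fun m : ℕ => ‖gc α (m + 1) * x ^ (m + 1)‖) :=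
    hg.comp_injective (add_left_injective 1)
  have hsummand : ∀ m : ℕ, gc α (m + 1) * x ^ (m + 1)
      = α * (((m : ℂ) + 1) + α) ^ m / (Nat.factorial (m + 1) : ℂ) * x ^ (m + 1) := by
    intro m; rfl
  constructor
  · apply hshift.congr
    intro m
    rw [hsummand m]
  · have hYx : (∑' m : ℕ, treeCoeff m * x ^ m) = Yf x := rfl
    rw [hYx, main_eq α hx]
    show (∑' m : ℕ, gc α m * x ^ m) = _
    rw [Summable.tsum_eq_zero_add hg.of_norm]
    congr 1
    simp [gc]
end

section
/- For all positive integers μ and r and every integer s, the following identity of rational numbers holds: ⟨−μs/r⟩ + ⟨μ(s+1)/r⟩ + δ_{r ∣ μs} + δ_{r ∣ μ(s+1)} + ⌊μ/r + ⟨μs/r⟩ − gcd(μ,r)/r⌋ = 1 + μ/r, where ⌊q⌋ is the floor and ⟨q⟩ = q − ⌊q⌋ the fractional part of a rational number q, and δ_{r ∣ a} equals 1 if r divides a and 0 otherwise. -/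
/-- For all positive integers μ, r and every integer s,
⟨−μs/r⟩ + ⟨μ(s+1)/r⟩ + δ_{r∣μs} + δ_{r∣μ(s+1)} + ⌊μ/r + ⟨μs/r⟩ − gcd(μ,r)/r⌋ = 1 + μ/r,
where ⌊·⌋ is the floor, ⟨·⟩ the fractional part, and δ the divisibility indicator. -/
theorem stmt18 (μ r : ℕ) (hμ : 0 < μ) (hr : 0 < r) (s : ℤ) :
    Int.fract (-(μ : ℚ) * (s : ℚ) / (r : ℚ)) + Int.fract ((μ : ℚ) * ((s : ℚ) + 1) / (r : ℚ)) +
      (if (r : ℤ) ∣ (μ : ℤ) * s then (1 : ℚ) else 0) +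
      (if (r : ℤ) ∣ (μ : ℤ) * (s + 1) then (1 : ℚ) else 0) +
      ((⌊(μ : ℚ) / (r : ℚ) + Int.fract ((μ : ℚ) * (s : ℚ) / (r : ℚ)) -
          (Nat.gcd μ r : ℚ) / (r : ℚ)⌋ : ℤ) : ℚ) =
      1 + (μ : ℚ) / (r : ℚ) := by
  have hrZ : (0:ℤ) < (r:ℤ) := by exact_mod_cast hr
  set x : ℤ := (μ:ℤ) * s with hx
  have e1 : -(μ : ℚ) * (s : ℚ) / (r : ℚ) = ((-x : ℤ) : ℚ) / ((r:ℕ) : ℚ) := by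
    push_cast [hx]; ring
  have e2 : (μ : ℚ) * ((s : ℚ) + 1) / (r : ℚ) = ((x + μ : ℤ) : ℚ) / ((r:ℕ) : ℚ) := by
    push_cast [hx]; ring
  have e3 : (μ : ℚ) * (s : ℚ) / (r : ℚ) = ((x : ℤ) : ℚ) / ((r:ℕ) : ℚ) := by
    push_cast [hx]; ring
  rw [e1, e2, e3, Int.fract_div_intCast_eq_div_intCast_mod,
    Int.fract_div_intCast_eq_div_intCast_mod, Int.fract_div_intCast_eq_div_intCast_mod]
  have e4 : (μ : ℚ) / (r : ℚ) + ((x % (r:ℕ) : ℤ) : ℚ) / ((r:ℕ):ℚ) - (Nat.gcd μ r : ℚ) / (r : ℚ)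
      = (((μ:ℤ) + x % (r:ℤ) - (Nat.gcd μ r : ℤ) : ℤ) : ℚ) / ((r:ℕ) : ℚ) := by
    push_cast; ring
  rw [e4, Rat.floor_intCast_div_natCast]
  set g : ℤ := (Nat.gcd μ r : ℤ) with hg
  set a : ℤ := x % (r:ℤ) with ha
  set b : ℤ := (x + μ) % (r:ℤ) with hb
  set q : ℤ := ((μ:ℤ) + a - g) / (r:ℤ) with hq
  have ha0 : 0 ≤ a := Int.emod_nonneg _ (ne_of_gt hrZ)
  have ha1 : a < r := Int.emod_lt_of_pos _ hrZ
  have hb0 : 0 ≤ b := Int.emod_nonneg _ (ne_of_gt hrZ)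
  have hb1 : b < r := Int.emod_lt_of_pos _ hrZ
  have hg0 : 0 < g := by simp [hg]; exact Or.inl hμ
  have hgμ : g ∣ (μ:ℤ) := by rw [hg]; exact_mod_cast Int.natCast_dvd_natCast.mpr (Nat.gcd_dvd_left μ r)
  have hgr : g ∣ (r:ℤ) := by rw [hg]; exact_mod_cast Int.natCast_dvd_natCast.mpr (Nat.gcd_dvd_right μ r)
  have hg1 : g ≤ r := Int.le_of_dvd hrZ hgr
  have hgb : g ∣ b := by
    have h1 : g ∣ x + μ := Dvd.dvd.add (hx ▸ Dvd.dvd.mul_right hgμ s) hgμ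
    have h2 := hgr
    have := Int.mul_ediv_add_emod (x + μ) (r:ℤ)
    have : b = (x + μ) - (r:ℤ) * ((x + μ) / (r:ℤ)) := by omega
    rw [this]; exact dvd_sub h1 (h2.mul_right _)
  -- divisibility indicators
  have hd1 : ((r:ℤ) ∣ x) ↔ a = 0 := by rw [ha]; exact Int.dvd_iff_emod_eq_zero
  have hd2 : ((r:ℤ) ∣ (μ:ℤ) * (s + 1)) ↔ b = 0 := by
    rw [show (μ:ℤ) * (s + 1) = x + μ by rw [hx]; ring, hb]
    exact Int.dvd_iff_emod_eq_zero
  have hcong : ∀ u v : ℤ, (r:ℤ) ∣ (u - v) → u % (r:ℤ) = v % (r:ℤ) := by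
    intro u v h
    exact Int.emod_eq_emod_iff_emod_sub_eq_zero.mpr (Int.emod_eq_zero_of_dvd h)
  have hxa : (r:ℤ) ∣ x - a := ⟨x / (r:ℤ), by have := Int.mul_ediv_add_emod x (r:ℤ); omega⟩
  have hxb : (r:ℤ) ∣ (x + μ) - b := ⟨(x + μ) / (r:ℤ), by have := Int.mul_ediv_add_emod (x + μ) (r:ℤ); omega⟩
  have hnegx : (-x) % (r:ℤ) = if a = 0 then 0 else (r:ℤ) - a := by
    have h1 : (-x) % (r:ℤ) = ((r:ℤ) - a) % (r:ℤ) := by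
      refine hcong _ _ ?_
      obtain ⟨c, hc⟩ := hxa
      exact ⟨-c - 1, by linear_combination -hc⟩
    by_cases hA : a = 0
    · simp [h1, hA]
    · rw [h1, Int.emod_eq_of_lt (by omega) (by omega)]
      simp [hA]
  have hmval : ((μ:ℤ) + a - g) % (r:ℤ) = if b = 0 then (r:ℤ) - g else b - g := by
    have h1 : ((μ:ℤ) + a - g) % (r:ℤ) = (b - g) % (r:ℤ) := by
      refine hcong _ _ ?_
      obtain ⟨c, hc⟩ := hxa
      obtain ⟨d, hd⟩ := hxb
      exact ⟨d - c, by linear_combination hd - hc⟩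
    by_cases hB : b = 0
    · rw [h1, hB]
      have h2 : ((0:ℤ) - g) % (r:ℤ) = ((r:ℤ) - g) % (r:ℤ) := hcong _ _ ⟨-1, by omega⟩
      rw [h2, Int.emod_eq_of_lt (by omega) (by omega)]
      simp
    · have hgle : g ≤ b := Int.le_of_dvd (by omega) hgb
      rw [h1, Int.emod_eq_of_lt (by omega) (by omega)]
      simp [hB]
  have hdivq : (r:ℤ) * q + ((μ:ℤ) + a - g) % (r:ℤ) = (μ:ℤ) + a - g := Int.mul_ediv_add_emod _ _
  have hr0 : ((r:ℕ):ℚ) ≠ 0 := by positivity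
  rw [hmval] at hdivq
  simp only [hd1, hd2]
  rw [hnegx]
  by_cases hA : a = 0 <;> by_cases hB : b = 0 <;>
    simp only [hA, hB, if_true, if_false] at hdivq ⊢
  all_goals push_cast
  · have key : ((r:ℕ):ℚ) * (q:ℚ) = (μ:ℚ) - r := by
      have h : (r:ℤ) * q = (μ:ℤ) - r := by linarith
      exact_mod_cast h
    field_simp
    linarith [key]
  · have key : ((r:ℕ):ℚ) * (q:ℚ) = (μ:ℚ) - ((b:ℤ):ℚ) := by
      have h : (r:ℤ) * q = (μ:ℤ) - b := by linarith
      exact_mod_cast h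
    field_simp
    linarith [key]
  · have key : ((r:ℕ):ℚ) * (q:ℚ) = (μ:ℚ) + ((a:ℤ):ℚ) - r := by
      have h : (r:ℤ) * q = (μ:ℤ) + a - r := by linarith
      exact_mod_cast h
    field_simp
    linarith [key]
  · have key : ((r:ℕ):ℚ) * (q:ℚ) = (μ:ℚ) + ((a:ℤ):ℚ) - ((b:ℤ):ℚ) := by
      have h : (r:ℤ) * q = (μ:ℤ) + a - b := by linarith
      exact_mod_cast h
    field_simp
    linarith [key]
end
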